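/- arXiv:1803.10898 — 7 statements merged into one kernel-verified Lean document; each statement's English description precedes it below -/
import Mathlib

section
/- Suppose the primal problem P has an optimal solution x* and the Slater condition holds (there exists x̃ ∈ X with g(x̃,ξ) < 0 for all ξ ∈ Ξ). Then there exists a finite nonnegative Borel measure Λ* on Ξ such that (x*, Λ*) is a saddle point of the Lagrangian L on X × M₊(Ξ), i.e. L(x*,Λ) ≤ L(x*,Λ*) ≤ L(x,Λ*) for all x ∈ X and Λ ∈ M₊(Ξ); in particular min_{x∈X} sup_{Λ∈M₊(Ξ)} L(x,Λ) = sup_{Λ∈M₊(Ξ)} inf_{x∈X} L(x,Λ) = L(x*,Λ*). -/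
open MeasureTheory Set

noncomputable section


private lemma combo_lt {a b u v u' v' : ℝ} (ha : 0 ≤ a) (hb : 0 ≤ b) (hab : a + b = 1)
    (h1 : u < u') (h2 : v < v') : a * u + b * v < a * u' + b * v' := by
  rcases eq_or_lt_of_le ha with h | h
  · have hb1 : b = 1 := by linarith
    simp only [← h, zero_mul, zero_add, hb1, one_mul]
    exact h2
  · have h1' := mul_lt_mul_of_pos_left h1 h
    have h2' := mul_le_mul_of_nonneg_left h2.le hb
    linarith

private lemma aux_nonneg {K A B : ℝ} (h : ∀ s : ℝ, 0 ≤ s → K < A + B * s) : 0 ≤ B := by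
  by_contra hB
  push_neg at hB
  have h0 := h 0 le_rfl
  have harg : 0 ≤ (K - A - 1) / B :=
    div_nonneg_of_nonpos (by linarith) hB.le
  have h2 := h _ harg
  rw [mul_div_cancel₀ _ (ne_of_lt hB)] at h2
  linarith

private lemma aux_le {K A B : ℝ} (h : ∀ ε : ℝ, 0 < ε → K < A + ε * B) : K ≤ A := by
  by_contra hKA
  push_neg at hKA
  set ε := (K - A) / (2 * (|B| + 1)) with hε
  have hεpos : 0 < ε := div_pos (by linarith) (by positivity)
  have h1 := h ε hεpos
  have h2 : ε * B ≤ ε * |B| := mul_le_mul_of_nonneg_left (le_abs_self B) hεpos.le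
  have h3 : ε * |B| ≤ (K - A) / 2 := by
    rw [hε, div_mul_eq_mul_div, div_le_div_iff₀ (by positivity) (by norm_num)]
    nlinarith [abs_nonneg B]
  linarith

private lemma finite_duality {n k : ℕ} {X : Set (EuclideanSpace ℝ (Fin n))}
    (hXconv : Convex ℝ X)
    {f : EuclideanSpace ℝ (Fin n) → ℝ} (hfconv : ConvexOn ℝ X f)
    {G : Fin k → EuclideanSpace ℝ (Fin n) → ℝ} (hGconv : ∀ i, ConvexOn ℝ X (G i))
    {c : ℝ} (hno : ¬ ∃ x ∈ X, f x < c ∧ ∀ i, G i x ≤ 0)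
    {xt : EuclideanSpace ℝ (Fin n)} (hxt : xt ∈ X) (hSl : ∀ i, G i xt < 0) :
    ∃ lam : Fin k → ℝ, (∀ i, 0 ≤ lam i) ∧ ∀ x ∈ X, c ≤ f x + ∑ i, lam i * G i x := by
  classical
  set C : Set (ℝ × (Fin k → ℝ)) := {p | ∃ x ∈ X, f x < p.1 ∧ ∀ i, G i x < p.2 i} with hC
  have hCopen : IsOpen C := by
    have hCeq : C = ⋃ x ∈ X, (Ioi (f x) ×ˢ Set.pi univ fun i => Ioi (G i x)) := by
      ext p
      simp only [hC, mem_setOf_eq, mem_iUnion, mem_prod, mem_Ioi, Set.mem_pi, mem_univ,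
        forall_true_left, exists_prop, true_implies]
    rw [hCeq]
    exact isOpen_biUnion fun x _ =>
      (isOpen_Ioi).prod (isOpen_set_pi finite_univ fun i _ => isOpen_Ioi)
  have hCconv : Convex ℝ C := by
    rintro p ⟨xp, hxp, hfp, hgp⟩ q ⟨xq, hxq, hfq, hgq⟩ a b ha hb hab
    refine ⟨a • xp + b • xq, hXconv hxp hxq ha hb hab, ?_, ?_⟩
    · have h1 : f (a • xp + b • xq) ≤ a * f xp + b * f xq := by
        simpa [smul_eq_mul] using hfconv.2 hxp hxq ha hb hab
      have h2 : a * f xp + b * f xq < a * p.1 + b * q.1 := combo_lt ha hb hab hfp hfq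
      have h3 : (a • p + b • q).1 = a * p.1 + b * q.1 := by
        simp [Prod.smul_fst, Prod.fst_add, smul_eq_mul]
      rw [h3]; exact lt_of_le_of_lt h1 h2
    · intro i
      have h1 : G i (a • xp + b • xq) ≤ a * G i xp + b * G i xq := by
        simpa [smul_eq_mul] using (hGconv i).2 hxp hxq ha hb hab
      have h2 : a * G i xp + b * G i xq < a * p.2 i + b * q.2 i :=
        combo_lt ha hb hab (hgp i) (hgq i)
      have h3 : (a • p + b • q).2 i = a * p.2 i + b * q.2 i := by
        simp [Prod.smul_snd, Prod.snd_add, smul_eq_mul]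
      rw [h3]; exact lt_of_le_of_lt h1 h2
  have hnotC : ((c, (0 : Fin k → ℝ)) : ℝ × (Fin k → ℝ)) ∉ C := by
    rintro ⟨x, hx, hfx, hgx⟩
    exact hno ⟨x, hx, hfx, fun i => (hgx i).le⟩
  obtain ⟨ℓ, hℓ⟩ := geometric_hahn_banach_point_open hCconv hCopen hnotC
  set α : ℝ := ℓ (1, (0 : Fin k → ℝ)) with hα
  set β : Fin k → ℝ := fun i => ℓ (0, Pi.single i 1) with hβdef
  have hdecomp : ∀ p : ℝ × (Fin k → ℝ), ℓ p = α * p.1 + ∑ i, β i * p.2 i := by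
    intro p
    have hp : p = p.1 • ((1 : ℝ), (0 : Fin k → ℝ))
        + ∑ i, p.2 i • (((0 : ℝ), Pi.single i (1 : ℝ)) : ℝ × (Fin k → ℝ)) := by
      apply Prod.ext
      · simp [Prod.fst_sum]
      · simp only [Prod.snd_add, Prod.smul_snd, Prod.snd_sum, smul_zero, zero_add]
        have : ∀ i : Fin k, p.2 i • (Pi.single i (1 : ℝ) : Fin k → ℝ)
            = (Pi.single i (p.2 i) : Fin k → ℝ) := by
          intro i
          rw [← Pi.single_smul, smul_eq_mul, mul_one]
        rw [Finset.sum_congr rfl fun i _ => this i, Finset.univ_sum_single]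
    conv_lhs => rw [hp]
    rw [map_add, ℓ.map_smul, map_sum]
    simp only [smul_eq_mul, ← hα]
    congr 1
    · ring
    · refine Finset.sum_congr rfl fun i _ => ?_
      rw [ℓ.map_smul, smul_eq_mul, mul_comm]
  have hkey : ∀ x ∈ X, ∀ r : ℝ, f x < r → ∀ bb : Fin k → ℝ, (∀ i, G i x < bb i) →
      α * c < α * r + ∑ i, β i * bb i := by
    intro x hx r hr bb hbb
    have h := hℓ (r, bb) ⟨x, hx, hr, hbb⟩
    rw [hdecomp, hdecomp] at h
    simpa using h
  have hβ : ∀ j, 0 ≤ β j := by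
    intro j
    apply aux_nonneg (K := α * c) (A := α * (f xt + 1) + ∑ i, β i * (G i xt + 1)) (B := β j)
    intro s hs
    have h := hkey xt hxt (f xt + 1) (by linarith)
      (fun i => G i xt + 1 + if i = j then s else 0)
      (fun i => by split_ifs <;> linarith [hSl i])
    have hsum : ∑ i, β i * (G i xt + 1 + if i = j then s else 0)
        = (∑ i, β i * (G i xt + 1)) + β j * s := by
      simp_rw [mul_add, Finset.sum_add_distrib, mul_ite, mul_zero]
      rw [Finset.sum_ite_eq' Finset.univ j (fun i => β i * s)]
      simp
    rw [hsum] at h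
    linarith
  have hα0 : 0 ≤ α := by
    apply aux_nonneg (K := α * c) (A := α * (f xt + 1) + ∑ i, β i * (G i xt + 1)) (B := α)
    intro s hs
    have h := hkey xt hxt (f xt + 1 + s) (by linarith)
      (fun i => G i xt + 1) (fun i => by linarith [hSl i])
    have : α * (f xt + 1 + s) = α * (f xt + 1) + α * s := by ring
    rw [this] at h
    linarith
  have hineq : ∀ x ∈ X, α * c ≤ α * f x + ∑ i, β i * G i x := by
    intro x hx
    apply aux_le (B := α + ∑ i, β i)
    intro ε hε
    have h := hkey x hx (f x + ε) (by linarith)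
      (fun i => G i x + ε) (fun i => by linarith)
    have hsum : ∑ i, β i * (G i x + ε) = ∑ i, β i * G i x + ε * ∑ i, β i := by
      simp_rw [mul_add, Finset.sum_add_distrib]
      rw [Finset.mul_sum]
      congr 1
      exact Finset.sum_congr rfl fun i _ => by ring
    rw [hsum] at h
    have hexp : α * (f x + ε) = α * f x + ε * α := by ring
    rw [hexp] at h
    have : ε * (α + ∑ i, β i) = ε * α + ε * ∑ i, β i := by ring
    rw [this]
    linarith
  have hαpos : 0 < α := by
    rcases eq_or_lt_of_le hα0 with h0 | h
    · exfalso
      have h1 := hineq xt hxt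
      rw [← h0] at h1
      simp only [zero_mul, zero_add] at h1
      have h2 : ∀ i ∈ Finset.univ, β i * G i xt ≤ 0 :=
        fun i _ => mul_nonpos_of_nonneg_of_nonpos (hβ i) (hSl i).le
      have h4 : ∑ i, β i * G i xt = 0 := le_antisymm (Finset.sum_nonpos h2) h1
      have h5 := (Finset.sum_eq_zero_iff_of_nonpos h2).mp h4
      have hβ0 : ∀ i, β i = 0 := by
        intro i
        rcases mul_eq_zero.mp (h5 i (Finset.mem_univ i)) with h | h
        · exact h
        · exact absurd h (ne_of_lt (hSl i))
      have h6 := hkey xt hxt (f xt + 1) (by linarith)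
        (fun i => G i xt + 1) (fun i => by linarith [hSl i])
      rw [← h0] at h6
      simp [hβ0] at h6
    · exact h
  refine ⟨fun i => β i / α, fun i => div_nonneg (hβ i) hαpos.le, ?_⟩
  intro x hx
  have h := hineq x hx
  have hmul : α * (f x + ∑ i, β i / α * G i x) = α * f x + ∑ i, β i * G i x := by
    rw [mul_add, Finset.mul_sum]
    congr 1
    refine Finset.sum_congr rfl fun i _ => ?_
    field_simp
  exact le_of_mul_le_mul_left (by rw [hmul]; exact h) hαpos


private lemma finite_reduction {m d : ℕ} {X : Set (EuclideanSpace ℝ (Fin m))}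
    {Ξ : Set (EuclideanSpace ℝ (Fin d))}
    {f : EuclideanSpace ℝ (Fin m) → ℝ}
    {g : EuclideanSpace ℝ (Fin m) → EuclideanSpace ℝ (Fin d) → ℝ}
    (hXconv : Convex ℝ X) (hXcomp : IsCompact X) (hΞcomp : IsCompact Ξ)
    (hfconv : ConvexOn ℝ X f) (hfcont : ContinuousOn f X)
    (hgconv : ∀ ξ ∈ Ξ, ConvexOn ℝ X fun x => g x ξ)
    (hgcontx : ∀ ξ ∈ Ξ, ContinuousOn (fun x => g x ξ) X)
    (hgcontξ : ∀ x ∈ X, ContinuousOn (fun ξ => g x ξ) Ξ)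
    {xs : EuclideanSpace ℝ (Fin m)} (hxsX : xs ∈ X)
    (hxsopt : ∀ x ∈ X, (∀ ξ ∈ Ξ, g x ξ ≤ 0) → f xs ≤ f x)
    {xt : EuclideanSpace ℝ (Fin m)} (hxt : xt ∈ X)
    (hSlater : ∀ ξ ∈ Ξ, g xt ξ < 0) :
    ∃ (k : ℕ) (τ : Fin k → EuclideanSpace ℝ (Fin d)), (∀ i, τ i ∈ Ξ) ∧
      ¬ ∃ x ∈ X, f x < f xs ∧ ∀ i, g x (τ i) ≤ 0 := by
  classical
  rcases Ξ.eq_empty_or_nonempty with hempty | ⟨ξ0, hξ0⟩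
  · refine ⟨0, Fin.elim0, fun i => i.elim0, ?_⟩
    rintro ⟨x, hx, hfx, -⟩
    exact absurd (hxsopt x hx (fun ξ hξ => absurd hξ (by simp [hempty]))) (not_le.mpr hfx)
  by_contra hcon
  push_neg at hcon
  set n := m + 1 with hn
  have key : ∀ τ : Fin n → EuclideanSpace ℝ (Fin d), (∀ i, τ i ∈ Ξ) →
      ∃ (y : EuclideanSpace ℝ (Fin m)) (W : Fin n → Set (EuclideanSpace ℝ (Fin d))),
        y ∈ X ∧ f y < f xs ∧ (∀ i, IsOpen (W i)) ∧ (∀ i, τ i ∈ W i) ∧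
        (∀ i, ∀ ξ ∈ W i ∩ Ξ, g y ξ < 0) := by
    intro τ hτ
    obtain ⟨x₀, hx₀X, hx₀f, hx₀g⟩ := hcon n τ hτ
    set εf := f xs - f x₀ with hεf
    have hεfpos : 0 < εf := by rw [hεf]; linarith
    set t := min (1/2) (εf / (2 * (|f xt - f x₀| + 1))) with ht
    have htpos : 0 < t := lt_min (by norm_num) (by positivity)
    have htle : t ≤ 1/2 := min_le_left _ _
    set y := (1 - t) • x₀ + t • xt with hy
    have hyX : y ∈ X := hXconv hx₀X hxt (by linarith) htpos.le (by ring)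
    have hyf : f y < f xs := by
      have h1 : f y ≤ (1 - t) * f x₀ + t * f xt := by
        simpa [smul_eq_mul] using hfconv.2 hx₀X hxt (by linarith) htpos.le (by ring)
      have h2 : t * |f xt - f x₀| ≤ εf / 2 := by
        have hmr := min_le_right (1/2) (εf / (2 * (|f xt - f x₀| + 1)))
        calc t * |f xt - f x₀| ≤ (εf / (2 * (|f xt - f x₀| + 1))) * |f xt - f x₀| :=
              mul_le_mul_of_nonneg_right hmr (abs_nonneg _)
          _ ≤ εf / 2 := by
              rw [div_mul_eq_mul_div, div_le_div_iff₀ (by positivity) (by norm_num)]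
              nlinarith [abs_nonneg (f xt - f x₀), hεfpos.le]
      have h3 : t * (f xt - f x₀) ≤ t * |f xt - f x₀| :=
        mul_le_mul_of_nonneg_left (le_abs_self _) htpos.le
      nlinarith
    have hyg : ∀ i, g y (τ i) < 0 := by
      intro i
      have h1 : g y (τ i) ≤ (1 - t) * g x₀ (τ i) + t * g xt (τ i) := by
        simpa [smul_eq_mul] using
          (hgconv (τ i) (hτ i)).2 hx₀X hxt (by linarith) htpos.le (by ring)
      have h2 := hSlater (τ i) (hτ i)
      have h3 := hx₀g i
      nlinarith
    have hW : ∀ i : Fin n, ∃ W : Set (EuclideanSpace ℝ (Fin d)), IsOpen W ∧ τ i ∈ W ∧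
        ∀ ξ ∈ W ∩ Ξ, g y ξ < 0 := by
      intro i
      have hc : ContinuousWithinAt (fun ξ => g y ξ) Ξ (τ i) := (hgcontξ y hyX) (τ i) (hτ i)
      have hm : (fun ξ => g y ξ) ⁻¹' Iio 0 ∈ nhdsWithin (τ i) Ξ :=
        hc.preimage_mem_nhdsWithin (isOpen_Iio.mem_nhds (hyg i))
      rw [mem_nhdsWithin] at hm
      obtain ⟨U, hUopen, hUmem, hUsub⟩ := hm
      exact ⟨U, hUopen, hUmem, fun ξ hξ => hUsub hξ⟩
    choose W hWopen hWmem hWneg using hW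
    exact ⟨y, W, hyX, hyf, hWopen, hWmem, hWneg⟩
  choose! y W hyX hyf hWopen hWmem hWneg using key
  set P : Set (Fin n → EuclideanSpace ℝ (Fin d)) := Set.pi univ (fun _ => Ξ) with hP
  have hPmem : ∀ τ ∈ P, ∀ i, τ i ∈ Ξ := fun τ hτ i => hτ i (mem_univ i)
  have hPcomp : IsCompact P := isCompact_univ_pi fun _ => hΞcomp
  have hcover : P ⊆ ⋃ τ ∈ P, Set.pi univ (fun i => W τ i) := by
    intro τ hτ
    exact mem_biUnion hτ (fun i _ => hWmem τ (hPmem τ hτ) i)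
  obtain ⟨b, hbP, hbfin, hbcov⟩ := hPcomp.elim_finite_subcover_image
    (fun τ hτ => isOpen_set_pi finite_univ fun i _ => hWopen τ (hPmem τ hτ) i) hcover
  have hτ0P : (fun _ : Fin n => ξ0) ∈ P := fun i _ => hξ0
  obtain ⟨σ0, hσ0b, -⟩ := mem_iUnion₂.mp (hbcov hτ0P)
  set Fs : Finset ℝ := hbfin.toFinset.image (fun τ => f (y τ)) with hFs
  have hFsne : Fs.Nonempty := ⟨f (y σ0), Finset.mem_image_of_mem _ (hbfin.mem_toFinset.mpr hσ0b)⟩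
  set c := Fs.max' hFsne with hc
  have hclt : c < f xs := by
    have hmem := Fs.max'_mem hFsne
    obtain ⟨τ, hτmem, hτeq⟩ := Finset.mem_image.mp hmem
    have hτP := hbP (hbfin.mem_toFinset.mp hτmem)
    calc c = f (y τ) := hτeq.symm
      _ < f xs := hyf τ (hPmem τ hτP)
  set F : Ξ → Set (EuclideanSpace ℝ (Fin m)) := fun ξ =>
    {x | x ∈ X ∧ f x ≤ c ∧ g x (ξ : EuclideanSpace ℝ (Fin d)) ≤ 0} with hF
  have hFconv : ∀ ξ : Ξ, Convex ℝ (F ξ) := by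
    intro ξ
    have h1 : Convex ℝ {x ∈ X | f x ≤ c} := hfconv.convex_le c
    have h2 : Convex ℝ {x ∈ X | g x (ξ : EuclideanSpace ℝ (Fin d)) ≤ 0} :=
      (hgconv ξ ξ.2).convex_le 0
    have : F ξ = {x ∈ X | f x ≤ c} ∩ {x ∈ X | g x (ξ : EuclideanSpace ℝ (Fin d)) ≤ 0} := by
      ext x; simp only [hF, mem_setOf_eq, mem_inter_iff]; tauto
    rw [this]
    exact h1.inter h2
  have hFcomp : ∀ ξ : Ξ, IsCompact (F ξ) := by
    intro ξ
    have h1 : IsClosed (X ∩ f ⁻¹' Iic c) :=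
      hfcont.preimage_isClosed_of_isClosed hXcomp.isClosed isClosed_Iic
    have h2 : IsClosed (X ∩ (fun x => g x (ξ : EuclideanSpace ℝ (Fin d))) ⁻¹' Iic 0) :=
      (hgcontx ξ ξ.2).preimage_isClosed_of_isClosed hXcomp.isClosed isClosed_Iic
    have heq : F ξ = (X ∩ f ⁻¹' Iic c) ∩ (X ∩ (fun x => g x (ξ : EuclideanSpace ℝ (Fin d))) ⁻¹' Iic 0) := by
      ext x
      simp only [hF, mem_setOf_eq, mem_inter_iff, mem_preimage, mem_Iic]
      tauto
    have hsub : F ξ ⊆ X := fun x hx => hx.1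
    exact IsCompact.of_isClosed_subset hXcomp (heq ▸ (h1.inter h2)) hsub
  have h_inter : ∀ I : Finset Ξ, I.card ≤ Module.finrank ℝ (EuclideanSpace ℝ (Fin m)) + 1 →
      (⋂ ξ ∈ I, F ξ).Nonempty := by
    intro I hI
    rw [finrank_euclideanSpace_fin] at hI
    rcases I.eq_empty_or_nonempty with rfl | hIne
    · simp only [Finset.notMem_empty, iInter_of_empty, iInter_univ]
      exact univ_nonempty
    have hLne : I.toList ≠ [] := fun h =>
      (Finset.nonempty_iff_ne_empty.mp hIne) (Finset.toList_eq_nil.mp h)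
    set L := I.toList with hL
    set dflt := L.head hLne with hdflt
    set τ : Fin n → EuclideanSpace ℝ (Fin d) := fun i => ((L.getD i.val dflt : Ξ) : EuclideanSpace ℝ (Fin d)) with hτdef
    have hτP : τ ∈ P := fun i _ => (L.getD i.val dflt).2
    obtain ⟨σ, hσb, hτσ⟩ := mem_iUnion₂.mp (hbcov hτP)
    have hσP : σ ∈ P := hbP hσb
    have hσΞ : ∀ i, σ i ∈ Ξ := hPmem σ hσP
    have hyyX : y σ ∈ X := hyX σ hσΞ
    have hyyc : f (y σ) ≤ c :=
      Finset.le_max' Fs _ (Finset.mem_image_of_mem _ (hbfin.mem_toFinset.mpr hσb))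
    refine ⟨y σ, ?_⟩
    rw [Set.mem_iInter₂]
    intro ξ hξI
    have hξL : ξ ∈ L := Finset.mem_toList.mpr hξI
    obtain ⟨j, hj⟩ := List.mem_iff_get.mp hξL
    have hlen : L.length ≤ n := by
      rw [hL, Finset.length_toList]
      exact hI
    have hjlt : (j : ℕ) < n := lt_of_lt_of_le j.isLt hlen
    have hτi : τ ⟨(j : ℕ), hjlt⟩ = (ξ : EuclideanSpace ℝ (Fin d)) := by
      rw [hτdef]
      simp only
      rw [List.getD_eq_getElem L dflt (by simpa using j.isLt)]
      rw [← hj]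
      simp [List.get_eq_getElem]
    have hneg : g (y σ) (τ ⟨(j : ℕ), hjlt⟩) < 0 :=
      hWneg σ hσΞ ⟨(j : ℕ), hjlt⟩ (τ ⟨(j : ℕ), hjlt⟩)
        ⟨hτσ ⟨(j : ℕ), hjlt⟩ (mem_univ _), hτP ⟨(j : ℕ), hjlt⟩ (mem_univ _)⟩
    exact ⟨hyyX, hyyc, by rw [← hτi]; exact hneg.le⟩
  obtain ⟨xbar, hxbar⟩ := Convex.helly_theorem_compact' (𝕜 := ℝ) hFconv hFcomp h_inter
  have h1 := mem_iInter.mp hxbar ⟨ξ0, hξ0⟩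
  have hxbarg : ∀ ξ ∈ Ξ, g xbar ξ ≤ 0 := fun ξ hξ => (mem_iInter.mp hxbar ⟨ξ, hξ⟩).2.2
  exact absurd (hxsopt xbar h1.1 hxbarg) (not_le.mpr (lt_of_le_of_lt h1.2.1 hclt))


private lemma dirac_sum_setIntegral {d k : ℕ} {Ξ : Set (EuclideanSpace ℝ (Fin d))}
    (hΞmeas : MeasurableSet Ξ) (τ : Fin k → EuclideanSpace ℝ (Fin d)) (hτ : ∀ i, τ i ∈ Ξ)
    (lam : Fin k → ℝ) (hlam : ∀ i, 0 ≤ lam i) (φ : EuclideanSpace ℝ (Fin d) → ℝ) :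
    ∫ ξ in Ξ, φ ξ ∂(∑ i, ENNReal.ofReal (lam i) • Measure.dirac (τ i))
      = ∑ i, lam i * φ (τ i) := by
  classical
  have hres : (∑ i, ENNReal.ofReal (lam i) • Measure.dirac (τ i)).restrict Ξ
      = ∑ i, ENNReal.ofReal (lam i) • Measure.dirac (τ i) := by
    ext s hs
    rw [Measure.restrict_apply hs, Measure.finset_sum_apply, Measure.finset_sum_apply]
    refine Finset.sum_congr rfl fun i _ => ?_
    rw [Measure.smul_apply, Measure.smul_apply, Measure.dirac_apply' _ (hs.inter hΞmeas),
      Measure.dirac_apply' _ hs]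
    by_cases h : τ i ∈ s
    · rw [Set.indicator_of_mem (mem_inter h (hτ i)), Set.indicator_of_mem h]
    · rw [Set.indicator_of_notMem (fun hc => h hc.1), Set.indicator_of_notMem h]
  rw [hres]
  rw [integral_finset_sum_measure (by
    intro i _
    refine Integrable.smul_measure ?_ ENNReal.ofReal_ne_top
    exact (integrable_const (φ (τ i))).congr (ae_eq_dirac φ).symm)]
  refine Finset.sum_congr rfl fun i _ => ?_
  rw [integral_smul_measure, integral_dirac, ENNReal.toReal_ofReal (hlam i), smul_eq_mul]

/-- Existence of a saddle point of the Lagrangian for the semi-infinite program, given an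
optimal primal solution and the Slater condition.  Nonnegative finite Borel measures on `Ξ`
are modelled as measures `Λ` on `ℝ^d` with `IsFiniteMeasure Λ` and `Λ Ξᶜ = 0`;  the
Lagrangian is `L(x,Λ) = f x + ∫_Ξ g(x,ξ) dΛ(ξ)`. -/
theorem stmt_0 {m d : ℕ}
    (X : Set (EuclideanSpace ℝ (Fin m))) (Ξ : Set (EuclideanSpace ℝ (Fin d)))
    (f : EuclideanSpace ℝ (Fin m) → ℝ)
    (g : EuclideanSpace ℝ (Fin m) → EuclideanSpace ℝ (Fin d) → ℝ)
    (hXconv : Convex ℝ X) (hXcomp : IsCompact X) (hΞcomp : IsCompact Ξ)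
    (hfconv : ConvexOn ℝ X f) (hfcont : ContinuousOn f X)
    (hgconv : ∀ ξ ∈ Ξ, ConvexOn ℝ X fun x => g x ξ)
    (hgcontx : ∀ ξ ∈ Ξ, ContinuousOn (fun x => g x ξ) X)
    (hgcontξ : ∀ x ∈ X, ContinuousOn (fun ξ => g x ξ) Ξ)
    -- `xs` is an optimal solution of the primal problem `P`
    (xs : EuclideanSpace ℝ (Fin m)) (hxsX : xs ∈ X)
    (hxsfeas : ∀ ξ ∈ Ξ, g xs ξ ≤ 0)
    (hxsopt : ∀ x ∈ X, (∀ ξ ∈ Ξ, g x ξ ≤ 0) → f xs ≤ f x)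
    -- Slater condition
    (xt : EuclideanSpace ℝ (Fin m)) (hxt : xt ∈ X)
    (hSlater : ∀ ξ ∈ Ξ, g xt ξ < 0) :
    ∃ Λs : Measure (EuclideanSpace ℝ (Fin d)), IsFiniteMeasure Λs ∧ Λs Ξᶜ = 0 ∧
      -- `(xs, Λs)` is a saddle point of `L` on `X × M₊(Ξ)`
      (∀ Λ : Measure (EuclideanSpace ℝ (Fin d)), IsFiniteMeasure Λ → Λ Ξᶜ = 0 →
        f xs + ∫ ξ in Ξ, g xs ξ ∂Λ ≤ f xs + ∫ ξ in Ξ, g xs ξ ∂Λs) ∧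
      (∀ x ∈ X, f xs + ∫ ξ in Ξ, g xs ξ ∂Λs ≤ f x + ∫ ξ in Ξ, g x ξ ∂Λs) ∧
      -- min-sup equals L(xs, Λs)
      (⨅ x ∈ X, ⨆ (Λ : Measure (EuclideanSpace ℝ (Fin d))) (_ : IsFiniteMeasure Λ)
            (_ : Λ Ξᶜ = 0), ((f x + ∫ ξ in Ξ, g x ξ ∂Λ : ℝ) : EReal))
          = ((f xs + ∫ ξ in Ξ, g xs ξ ∂Λs : ℝ) : EReal) ∧
      -- sup-inf equals L(xs, Λs)
      (⨆ (Λ : Measure (EuclideanSpace ℝ (Fin d))) (_ : IsFiniteMeasure Λ) (_ : Λ Ξᶜ = 0),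
            ⨅ x ∈ X, ((f x + ∫ ξ in Ξ, g x ξ ∂Λ : ℝ) : EReal))
          = ((f xs + ∫ ξ in Ξ, g xs ξ ∂Λs : ℝ) : EReal) := by
  classical
  have hΞmeas : MeasurableSet Ξ := hΞcomp.isClosed.measurableSet
  obtain ⟨k, τ, hτΞ, hno⟩ := finite_reduction hXconv hXcomp hΞcomp hfconv hfcont hgconv
    hgcontx hgcontξ hxsX hxsopt hxt hSlater
  obtain ⟨lam, hlam0, hdual⟩ := finite_duality (G := fun i x => g x (τ i)) hXconv hfconv
    (fun i => hgconv (τ i) (hτΞ i)) hno hxt (fun i => hSlater (τ i) (hτΞ i))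
  set Λs : Measure (EuclideanSpace ℝ (Fin d)) :=
    ∑ i, ENNReal.ofReal (lam i) • Measure.dirac (τ i) with hΛs
  have hint : ∀ φ : EuclideanSpace ℝ (Fin d) → ℝ,
      ∫ ξ in Ξ, φ ξ ∂Λs = ∑ i, lam i * φ (τ i) := fun φ =>
    dirac_sum_setIntegral hΞmeas τ hτΞ lam hlam0 φ
  have hfin : IsFiniteMeasure Λs := by
    constructor
    rw [hΛs, Measure.finset_sum_apply]
    refine ENNReal.sum_lt_top.mpr fun i _ => ?_
    rw [Measure.smul_apply, smul_eq_mul]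
    exact ENNReal.mul_lt_top ENNReal.ofReal_lt_top (by simp)
  have hcompl : Λs Ξᶜ = 0 := by
    rw [hΛs, Measure.finset_sum_apply]
    refine Finset.sum_eq_zero fun i _ => ?_
    rw [Measure.smul_apply, Measure.dirac_apply' _ hΞmeas.compl,
      Set.indicator_of_notMem (by simp [hτΞ i]), smul_zero]
  have hS0 : ∑ i, lam i * g xs (τ i) = 0 := by
    have h1 : f xs ≤ f xs + ∑ i, lam i * g xs (τ i) := hdual xs hxsX
    have h2 : ∑ i, lam i * g xs (τ i) ≤ 0 :=
      Finset.sum_nonpos fun i _ =>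
        mul_nonpos_of_nonneg_of_nonpos (hlam0 i) (hxsfeas (τ i) (hτΞ i))
    linarith
  have hintxs : ∫ ξ in Ξ, g xs ξ ∂Λs = 0 := by rw [hint (g xs)]; exact hS0
  have cond1 : ∀ Λ : Measure (EuclideanSpace ℝ (Fin d)), IsFiniteMeasure Λ → Λ Ξᶜ = 0 →
      f xs + ∫ ξ in Ξ, g xs ξ ∂Λ ≤ f xs + ∫ ξ in Ξ, g xs ξ ∂Λs := by
    intro Λ _ _
    rw [hintxs]
    have hle : ∫ ξ in Ξ, g xs ξ ∂Λ ≤ 0 := by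
      apply integral_nonpos_of_ae
      filter_upwards [ae_restrict_mem hΞmeas] with ξ hξ
      exact hxsfeas ξ hξ
    linarith
  have cond2 : ∀ x ∈ X, f xs + ∫ ξ in Ξ, g xs ξ ∂Λs ≤ f x + ∫ ξ in Ξ, g x ξ ∂Λs := by
    intro x hx
    rw [hintxs, hint (g x), add_zero]
    exact hdual x hx
  refine ⟨Λs, hfin, hcompl, cond1, cond2, ?_, ?_⟩
  · apply le_antisymm
    · refine iInf₂_le_of_le xs hxsX ?_
      refine iSup_le fun Λ => iSup_le fun hΛfin => iSup_le fun hΛc => ?_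
      exact EReal.coe_le_coe_iff.mpr (cond1 Λ hΛfin hΛc)
    · refine le_iInf₂ fun x hx => ?_
      refine le_iSup_of_le Λs (le_iSup_of_le hfin (le_iSup_of_le hcompl ?_))
      exact EReal.coe_le_coe_iff.mpr (cond2 x hx)
  · apply le_antisymm
    · refine iSup_le fun Λ => iSup_le fun hΛfin => iSup_le fun hΛc => ?_
      refine iInf₂_le_of_le xs hxsX ?_
      exact EReal.coe_le_coe_iff.mpr (cond1 Λ hΛfin hΛc)
    · refine le_iSup_of_le Λs (le_iSup_of_le hfin (le_iSup_of_le hcompl ?_))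
      refine le_iInf₂ fun x hx => ?_
      exact EReal.coe_le_coe_iff.mpr (cond2 x hx)
end
end

section
/- For any two finite nonnegative Borel measures Λ, Γ on a compact set Ξ ⊂ ℝ^d, B(Λ,Γ) ≥ 0, and B(Λ,Γ) = 0 if and only if Λ = Γ. -/
open MeasureTheory Set
open scoped Classical


lemma aux_nonneg_s5 {x : ℝ} (hx : 0 ≤ x) : 0 ≤ x * Real.log x - x + 1 := by
  rcases hx.eq_or_lt with h | h
  · simp [← h]
  · have h1 := Real.log_le_sub_one_of_pos (one_div_pos.mpr h)
    rw [Real.log_div one_ne_zero h.ne', Real.log_one] at h1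
    have h2 : x * (1 - 1/x) ≤ x * Real.log x :=
      mul_le_mul_of_nonneg_left (by linarith) h.le
    have hinv : x * (1/x) = 1 := by field_simp
    rw [mul_sub, hinv] at h2
    linarith

lemma aux_eq {x : ℝ} (hx : 0 ≤ x) (h : x * Real.log x - x + 1 = 0) : x = 1 := by
  by_contra hne
  rcases hx.eq_or_lt with h0 | h0
  · simp [← h0] at h
  · have h1 := Real.log_lt_sub_one_of_pos (one_div_pos.mpr h0) (by
      simpa [one_div, inv_eq_one] using hne)
    rw [Real.log_div one_ne_zero h0.ne', Real.log_one] at h1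
    have h2 : x * (1 - 1/x) < x * Real.log x :=
      mul_lt_mul_of_pos_left (by linarith) h0
    have hinv : x * (1/x) = 1 := by field_simp
    rw [mul_sub, hinv] at h2
    linarith


noncomputable section

/-- Kullback–Leibler divergence `D(φ,ϕ)` of measures on `Ξ`: equal to
`∫_Ξ log(dφ/dϕ) dφ` when `φ ≪ ϕ` and the log-density is `φ`-integrable on `Ξ`,
and `+∞` otherwise. -/
def KLdiv {E : Type*} [MeasurableSpace E] (Ξ : Set E) (φ ϕ : Measure E) : EReal :=
  if φ ≪ ϕ ∧ IntegrableOn (fun ξ => Real.log (φ.rnDeriv ϕ ξ).toReal) Ξ φ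
  then ((∫ ξ in Ξ, Real.log (φ.rnDeriv ϕ ξ).toReal ∂φ : ℝ) : EReal)
  else ⊤

/-- The prox function `B(Λ,Γ)` for nonnegative measures on `Ξ`:
`∫_Ξ log(dΛ/dΓ) dΛ − (Λ(Ξ) − Γ(Ξ))` when `Λ ≪ Γ` and `∫_Ξ |log(dΛ/dΓ)| dΛ < ∞`,
and `+∞` otherwise. -/
def Bprox {E : Type*} [MeasurableSpace E] (Ξ : Set E) (Λ Γ : Measure E) : EReal :=
  if Λ ≪ Γ ∧ IntegrableOn (fun ξ => Real.log (Λ.rnDeriv Γ ξ).toReal) Ξ Λ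
  then (((∫ ξ in Ξ, Real.log (Λ.rnDeriv Γ ξ).toReal ∂Λ) - ((Λ Ξ).toReal - (Γ Ξ).toReal) : ℝ) : EReal)
  else ⊤

/-- `H(ρ, ρ') = ρ log(ρ/ρ') − ρ + ρ'` (with `0 log 0 = 0`, automatic since
`Real.log 0 = 0`). -/
def Hfun (ρ ρ' : ℝ) : ℝ := ρ * Real.log (ρ / ρ') - ρ + ρ'

/-- `B(Λ,Γ) ≥ 0`, with equality iff `Λ = Γ`, for finite nonnegative Borel
measures supported on a compact set `Ξ ⊂ ℝ^d`. -/
theorem stmt_5 {d : ℕ} (Ξ : Set (EuclideanSpace ℝ (Fin d))) (hΞcomp : IsCompact Ξ)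
    (Λ Γ : Measure (EuclideanSpace ℝ (Fin d)))
    (hΛfin : IsFiniteMeasure Λ) (hΓfin : IsFiniteMeasure Γ)
    (hΛsupp : Λ Ξᶜ = 0) (hΓsupp : Γ Ξᶜ = 0) :
    0 ≤ Bprox Ξ Λ Γ ∧ (Bprox Ξ Λ Γ = 0 ↔ Λ = Γ) := by
  have hΞm : MeasurableSet Ξ := hΞcomp.isClosed.measurableSet
  have hΛr : Λ.restrict Ξ = Λ :=
    Measure.restrict_eq_self_of_ae_mem (ae_iff.mpr (by exact hΛsupp))
  have hΓr : Γ.restrict Ξ = Γ :=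
    Measure.restrict_eq_self_of_ae_mem (ae_iff.mpr (by exact hΓsupp))
  have hΛΞ : Λ Ξ = Λ univ := by
    rw [← measure_add_measure_compl hΞm, hΛsupp, add_zero]
  have hΓΞ : Γ Ξ = Γ univ := by
    rw [← measure_add_measure_compl hΞm, hΓsupp, add_zero]
  by_cases h : Λ ≪ Γ ∧ IntegrableOn (fun ξ => Real.log (Λ.rnDeriv Γ ξ).toReal) Ξ Λ
  · obtain ⟨hac, hint⟩ := h
    haveI : Λ.HaveLebesgueDecomposition Γ := Measure.haveLebesgueDecomposition_of_finiteMeasure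
    set f : EuclideanSpace ℝ (Fin d) → ℝ := fun ξ => (Λ.rnDeriv Γ ξ).toReal with hf
    have hint' : Integrable (fun ξ => Real.log (f ξ)) Λ := by
      rw [IntegrableOn, hΛr] at hint; exact hint
    have hchg : ∫ ξ, f ξ * Real.log (f ξ) ∂Γ = ∫ ξ, Real.log (f ξ) ∂Λ := by
      simpa [smul_eq_mul] using
        integral_rnDeriv_smul (f := fun ξ => Real.log (f ξ)) hac
    have hint2 : Integrable (fun ξ => f ξ * Real.log (f ξ)) Γ := by
      simpa [smul_eq_mul] using
        (integrable_rnDeriv_smul_iff (f := fun ξ => Real.log (f ξ)) hac).mpr hint'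
    have hintf : Integrable f Γ := Measure.integrable_toReal_rnDeriv
    set g : EuclideanSpace ℝ (Fin d) → ℝ := fun ξ => f ξ * Real.log (f ξ) - f ξ + 1 with hg
    have hg_int : Integrable g Γ := (hint2.sub hintf).add (integrable_const 1)
    have hg_nonneg : ∀ ξ, 0 ≤ g ξ := fun ξ => aux_nonneg_s5 ENNReal.toReal_nonneg
    have hIg : ∫ ξ, g ξ ∂Γ = (∫ ξ, Real.log (f ξ) ∂Λ) - (Λ univ).toReal + (Γ univ).toReal := by
      have e1 : ∫ ξ, g ξ ∂Γ
          = (∫ ξ, (f ξ * Real.log (f ξ) - f ξ) ∂Γ) + ∫ _, (1:ℝ) ∂Γ :=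
        integral_add (hint2.sub hintf) (integrable_const 1)
      have e2 : ∫ ξ, (f ξ * Real.log (f ξ) - f ξ) ∂Γ
          = (∫ ξ, f ξ * Real.log (f ξ) ∂Γ) - ∫ ξ, f ξ ∂Γ := integral_sub hint2 hintf
      rw [e1, e2, integral_const, Measure.integral_toReal_rnDeriv hac, hchg]
      simp [smul_eq_mul, measureReal_def]
    have hval : (∫ ξ in Ξ, Real.log (Λ.rnDeriv Γ ξ).toReal ∂Λ)
        - ((Λ Ξ).toReal - (Γ Ξ).toReal) = ∫ ξ, g ξ ∂Γ := by
      rw [hΛr, hΛΞ, hΓΞ, hIg]; ring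
    rw [Bprox, if_pos ⟨hac, hint⟩, hval]
    constructor
    · exact_mod_cast integral_nonneg hg_nonneg
    · rw [show ((∫ ξ, g ξ ∂Γ : ℝ) : EReal) = 0 ↔ (∫ ξ, g ξ ∂Γ) = (0:ℝ) from by
        exact_mod_cast Iff.rfl]
      constructor
      · intro h0
        have hae : g =ᵐ[Γ] 0 :=
          (integral_eq_zero_iff_of_nonneg (fun ξ => hg_nonneg ξ) hg_int).mp h0
        have h1 : Λ.rnDeriv Γ =ᵐ[Γ] 1 := by
          filter_upwards [hae, Measure.rnDeriv_lt_top Λ Γ] with ξ h2 h3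
          have : f ξ = 1 := aux_eq ENNReal.toReal_nonneg (by simpa using h2)
          simpa [hf, ENNReal.toReal_eq_one_iff] using this
        calc Λ = Γ.withDensity (Λ.rnDeriv Γ) := (Measure.withDensity_rnDeriv_eq _ _ hac).symm
          _ = Γ.withDensity 1 := withDensity_congr_ae h1
          _ = Γ := withDensity_one
      · intro hΛΓ
        have h1 : Λ.rnDeriv Γ =ᵐ[Γ] 1 := by rw [hΛΓ]; exact Measure.rnDeriv_self Γ
        have hae : g =ᵐ[Γ] fun _ => (0:ℝ) := by
          filter_upwards [h1] with ξ h1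
          simp [hg, hf, h1]
        rw [integral_congr_ae hae, integral_zero]
  · rw [Bprox, if_neg h]
    refine ⟨le_top, ?_⟩
    constructor
    · intro h0; exact absurd h0 (by simp)
    · intro hΛΓ
      subst hΛΓ
      exfalso
      refine h ⟨Measure.AbsolutelyContinuous.rfl, ?_⟩
      refine (integrable_zero _ _ _).congr ?_
      refine ae_restrict_of_ae ?_
      filter_upwards [Measure.rnDeriv_self Λ] with ξ h1
      simp [h1]
end
end

section
/- Define h(x) := x log x − x + 1 for x ≥ 0, with the convention 0 log 0 = 0. Then (4/3 + (2/3)x)·h(x) ≥ (x − 1)² for all x ≥ 0. -/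
noncomputable section

/-- `h(x) = x log x − x + 1` (with `0 log 0 = 0`, automatic since `Real.log 0 = 0`). -/
def hfun (x : ℝ) : ℝ := x * Real.log x - x + 1

def Gfun (x : ℝ) : ℝ := (x + 1) * Real.log x - 2 * (x - 1)

def Ffun (x : ℝ) : ℝ := x * (x + 2) * Real.log x - (x - 1) * (5 * x + 1) / 2

lemma G_hasDeriv {x : ℝ} (hx : 0 < x) :
    HasDerivAt Gfun (Real.log x + 1 / x - 1) x := by
  have h1 : HasDerivAt (fun x : ℝ => (x + 1) * Real.log x)
      (1 * Real.log x + (x + 1) * x⁻¹) x :=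
    ((hasDerivAt_id x).add_const 1).mul (Real.hasDerivAt_log hx.ne')
  have h2 : HasDerivAt (fun x : ℝ => 2 * (x - 1)) 2 x := by
    simpa using ((hasDerivAt_id x).sub_const 1).const_mul 2
  have := h1.sub h2
  refine (this : HasDerivAt Gfun _ x).congr_deriv ?_
  field_simp
  ring

lemma F_hasDeriv {x : ℝ} (hx : 0 < x) :
    HasDerivAt Ffun (2 * Gfun x) x := by
  have h1 : HasDerivAt (fun x : ℝ => x * (x + 2)) (1 * (x + 2) + x * 1) x :=
    (hasDerivAt_id x).mul ((hasDerivAt_id x).add_const 2)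
  have h2 : HasDerivAt (fun x : ℝ => x * (x + 2) * Real.log x)
      ((1 * (x + 2) + x * 1) * Real.log x + x * (x + 2) * x⁻¹) x :=
    h1.mul (Real.hasDerivAt_log hx.ne')
  have h3 : HasDerivAt (fun x : ℝ => (x - 1) * (5 * x + 1) / 2)
      ((1 * (5 * x + 1) + (x - 1) * 5) / 2) x := by
    have := (((hasDerivAt_id x).sub_const 1).mul
      (((hasDerivAt_id x).const_mul 5).add_const 1)).div_const 2
    simpa using this
  have := h2.sub h3
  refine (this : HasDerivAt Ffun _ x).congr_deriv ?_
  unfold Gfun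
  field_simp
  ring

lemma G_deriv_nonneg {x : ℝ} (hx : 0 < x) : 0 ≤ Real.log x + 1 / x - 1 := by
  have h := Real.log_le_sub_one_of_pos (x := 1 / x) (by positivity)
  rw [Real.log_div one_ne_zero hx.ne', Real.log_one] at h
  linarith

lemma G_nonneg_of_one_le {x : ℝ} (hx : 1 ≤ x) : 0 ≤ Gfun x := by
  have hmono : MonotoneOn Gfun (Set.Ici 1) := by
    apply monotoneOn_of_deriv_nonneg (convex_Ici 1)
    · exact fun y hy => (G_hasDeriv (lt_of_lt_of_le one_pos hy)).continuousAt.continuousWithinAt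
    · intro y hy
      rw [interior_Ici] at hy
      exact (G_hasDeriv (lt_trans one_pos hy)).differentiableAt.differentiableWithinAt
    · intro y hy
      rw [interior_Ici] at hy
      have hy0 : (0:ℝ) < y := lt_trans one_pos hy
      rw [(G_hasDeriv hy0).deriv]
      exact G_deriv_nonneg hy0
  have := hmono (Set.self_mem_Ici) (Set.mem_Ici.mpr hx) hx
  simpa [Gfun] using this

lemma G_nonpos_of_le_one {x : ℝ} (hx0 : 0 < x) (hx : x ≤ 1) : Gfun x ≤ 0 := by
  have hmono : MonotoneOn Gfun (Set.Ioc 0 1) := by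
    apply monotoneOn_of_deriv_nonneg (convex_Ioc 0 1)
    · exact fun y hy => (G_hasDeriv hy.1).continuousAt.continuousWithinAt
    · intro y hy
      rw [interior_Ioc] at hy
      exact (G_hasDeriv hy.1).differentiableAt.differentiableWithinAt
    · intro y hy
      rw [interior_Ioc] at hy
      rw [(G_hasDeriv hy.1).deriv]
      exact G_deriv_nonneg hy.1
  have := hmono (Set.mem_Ioc.mpr ⟨hx0, hx⟩) (Set.mem_Ioc.mpr ⟨one_pos, le_refl 1⟩) hx
  simpa [Gfun] using this

lemma F_nonneg {x : ℝ} (hx : 0 < x) : 0 ≤ Ffun x := by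
  rcases le_total 1 x with h1 | h1
  · have hmono : MonotoneOn Ffun (Set.Ici 1) := by
      apply monotoneOn_of_deriv_nonneg (convex_Ici 1)
      · exact fun y hy => (F_hasDeriv (lt_of_lt_of_le one_pos hy)).continuousAt.continuousWithinAt
      · intro y hy
        rw [interior_Ici] at hy
        exact (F_hasDeriv (lt_trans one_pos hy)).differentiableAt.differentiableWithinAt
      · intro y hy
        rw [interior_Ici] at hy
        have hy0 : (0:ℝ) < y := lt_trans one_pos hy
        rw [(F_hasDeriv hy0).deriv]
        have := G_nonneg_of_one_le (le_of_lt hy)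
        linarith
    have := hmono (Set.self_mem_Ici) (Set.mem_Ici.mpr h1) h1
    simpa [Ffun] using this
  · have hanti : AntitoneOn Ffun (Set.Ioc 0 1) := by
      apply antitoneOn_of_deriv_nonpos (convex_Ioc 0 1)
      · exact fun y hy => (F_hasDeriv hy.1).continuousAt.continuousWithinAt
      · intro y hy
        rw [interior_Ioc] at hy
        exact (F_hasDeriv hy.1).differentiableAt.differentiableWithinAt
      · intro y hy
        rw [interior_Ioc] at hy
        rw [(F_hasDeriv hy.1).deriv]
        have := G_nonpos_of_le_one hy.1 (le_of_lt hy.2)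
        linarith
    have := hanti (Set.mem_Ioc.mpr ⟨hx, h1⟩) (Set.mem_Ioc.mpr ⟨one_pos, le_refl 1⟩) h1
    simpa [Ffun] using this

/-- `(4/3 + (2/3) x) · h(x) ≥ (x − 1)²` for all `x ≥ 0`. -/
theorem stmt_8 : ∀ x : ℝ, 0 ≤ x → (x - 1) ^ 2 ≤ (4 / 3 + 2 / 3 * x) * hfun x := by
  intro x hx
  rcases eq_or_lt_of_le hx with h0 | h0
  · subst h0
    simp [hfun]
    norm_num
  · have hF := F_nonneg h0
    have key : (4 / 3 + 2 / 3 * x) * hfun x - (x - 1) ^ 2 = 2 / 3 * Ffun x := by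
      unfold hfun Ffun
      ring
    linarith
end
end

section
/- Let Ξ ⊂ ℝ^d be compact with vol(Ξ) > 0, let G : Ξ → ℝ be continuous, let κ > 0, let ρ̄ > 0 and ρ₀ ∈ (0, ρ̄], let Λ_u be the measure on Ξ with constant Lebesgue density ρ₀/vol(Ξ), let φ_u be the uniform probability measure on Ξ, and let V := {Λ ∈ M₊(Ξ) : Λ(Ξ) ≤ ρ̄}. Then sup_{Λ∈V} { ∫_Ξ G dΛ − κ·B(Λ, Λ_u) } = sup_{ρ∈[0,ρ̄]} { ρ · sup_{φ∈P(Ξ)} [ ∫_Ξ G dφ − κ·D(φ, φ_u) ] − κ·H(ρ, ρ₀) }, where P(Ξ) is the set of Borel probability measures on Ξ and H(0, ρ₀) := ρ₀. -/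
open MeasureTheory Set
open scoped Classical

noncomputable section

lemma ereal_mul_iSup {ι : Sort*} (f : ι → EReal) {c : ℝ} (hc : 0 < c) :
    (c : EReal) * (⨆ i, f i) = ⨆ i, (c : EReal) * f i := by
  have hc' : (0 : EReal) < (c : EReal) := by exact_mod_cast hc
  have hct : (c : EReal) ≠ ⊤ := EReal.coe_ne_top c
  refine le_antisymm ?_ (iSup_le fun i => mul_le_mul_of_nonneg_left (le_iSup f i) hc'.le)
  rw [mul_comm, ← EReal.le_div_iff_mul_le hc' hct]
  refine iSup_le fun i => ?_
  rw [EReal.le_div_iff_mul_le hc' hct, mul_comm]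
  exact le_iSup (fun i => (c : EReal) * f i) i

lemma ereal_iSup_sub {ι : Sort*} (f : ι → EReal) (c : ℝ) :
    (⨆ i, f i) - (c : EReal) = ⨆ i, (f i - (c : EReal)) := by
  refine le_antisymm ?_ (iSup_le fun i => EReal.sub_le_sub (le_iSup f i) le_rfl)
  rw [EReal.sub_le_iff_le_add (Or.inl (EReal.coe_ne_bot c)) (Or.inl (EReal.coe_ne_top c))]
  refine iSup_le fun i => ?_
  calc f i = f i - (c : EReal) + (c : EReal) := EReal.sub_add_cancel.symm
    _ ≤ (⨆ i, f i - (c : EReal)) + (c : EReal) :=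
        add_le_add_left (le_iSup (fun i => f i - (c : EReal)) i) _

lemma key_value {E : Type*} [MeasurableSpace E] (Ξ : Set E) (hΞm : MeasurableSet Ξ)
    (G : E → ℝ) {κ : ℝ} (hκ : 0 < κ) {ρ0 ρ : ℝ} (hρ0 : 0 < ρ0) (hρ : 0 < ρ)
    (φu : Measure E) [IsFiniteMeasure φu] (hφuΞ : φu Ξᶜ = 0) (hφuP : φu univ = 1)
    (φ : Measure E) [IsFiniteMeasure φ] (hφΞ : φ Ξᶜ = 0) (hφP : φ univ = 1) :
    ((∫ ξ in Ξ, G ξ ∂(ENNReal.ofReal ρ • φ) : ℝ) : EReal)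
      - (κ : EReal) * Bprox Ξ (ENNReal.ofReal ρ • φ) (ENNReal.ofReal ρ0 • φu)
    = (ρ : EReal) * (((∫ ξ in Ξ, G ξ ∂φ : ℝ) : EReal) - (κ : EReal) * KLdiv Ξ φ φu)
      - ((κ * Hfun ρ ρ0 : ℝ) : EReal) := by
  set a := ENNReal.ofReal ρ with ha_def
  set b := ENNReal.ofReal ρ0 with hb_def
  have ha0 : a ≠ 0 := (ENNReal.ofReal_pos.mpr hρ).ne'
  have hat : a ≠ ⊤ := ENNReal.ofReal_ne_top
  have hb0 : b ≠ 0 := (ENNReal.ofReal_pos.mpr hρ0).ne'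
  have hbt : b ≠ ⊤ := ENNReal.ofReal_ne_top
  have haR : a.toReal = ρ := ENNReal.toReal_ofReal hρ.le
  have hbR : b.toReal = ρ0 := ENNReal.toReal_ofReal hρ0.le
  haveI : IsFiniteMeasure (b • φu) := ⟨by
    rw [Measure.smul_apply, smul_eq_mul]
    exact ENNReal.mul_lt_top hbt.lt_top (measure_lt_top φu _)⟩
  have hφΞ1 : φ Ξ = 1 := by
    have h := measure_add_measure_compl (μ := φ) hΞm
    rw [hφΞ, add_zero, hφP] at h; exact h
  have hφuΞ1 : φu Ξ = 1 := by
    have h := measure_add_measure_compl (μ := φu) hΞm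
    rw [hφuΞ, add_zero, hφuP] at h; exact h
  have hmassΛ : ((a • φ) Ξ).toReal = ρ := by
    rw [Measure.smul_apply, smul_eq_mul, hφΞ1, mul_one, haR]
  have hmassΛu : ((b • φu) Ξ).toReal = ρ0 := by
    rw [Measure.smul_apply, smul_eq_mul, hφuΞ1, mul_one, hbR]
  have h1 : (a • φ).rnDeriv (b • φu) =ᵐ[φu] a • φ.rnDeriv (b • φu) := by
    have h := Measure.rnDeriv_smul_left_of_ne_top φ (b • φu) hat
    rwa [Measure.ae_ennreal_smul_measure_eq hb0] at h
  have h2 := Measure.rnDeriv_smul_right_of_ne_top φ φu hb0 hbt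
  have hrn : (a • φ).rnDeriv (b • φu) =ᵐ[φu] fun x => (a * b⁻¹) * φ.rnDeriv φu x := by
    filter_upwards [h1, h2] with x hx1 hx2
    rw [hx1]
    simp only [Pi.smul_apply, smul_eq_mul] at hx2 ⊢
    rw [hx2, ← mul_assoc]
  have hlog : φ ≪ φu → ∀ᵐ x ∂φ, Real.log (((a • φ).rnDeriv (b • φu)) x).toReal
      = Real.log (ρ / ρ0) + Real.log ((φ.rnDeriv φu) x).toReal := by
    intro hAC
    filter_upwards [hAC.ae_le hrn, Measure.rnDeriv_pos hAC,
      hAC.ae_le (Measure.rnDeriv_lt_top φ φu)] with x hx hpos hlt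
    have hcval : (a * b⁻¹).toReal = ρ / ρ0 := by
      rw [ENNReal.toReal_mul, haR, ENNReal.toReal_inv, hbR, div_eq_mul_inv]
    rw [hx, ENNReal.toReal_mul, hcval,
      Real.log_mul (div_pos hρ hρ0).ne' (ENNReal.toReal_pos hpos.ne' hlt.ne).ne']
  have hint_const : IntegrableOn (fun _ => Real.log (ρ / ρ0)) Ξ φ :=
    integrableOn_const (measure_lt_top φ Ξ).ne
  have hint_iff : φ ≪ φu →
      (IntegrableOn (fun ξ => Real.log (((a • φ).rnDeriv (b • φu)) ξ).toReal) Ξ (a • φ)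
        ↔ IntegrableOn (fun ξ => Real.log ((φ.rnDeriv φu) ξ).toReal) Ξ φ) := by
    intro hAC
    have hl : (fun ξ => Real.log (((a • φ).rnDeriv (b • φu)) ξ).toReal)
        =ᵐ[φ.restrict Ξ] fun ξ => Real.log (ρ / ρ0) + Real.log ((φ.rnDeriv φu) ξ).toReal :=
      ae_restrict_of_ae (hlog hAC)
    rw [IntegrableOn, Measure.restrict_smul, integrable_smul_measure ha0 hat]
    constructor
    · intro h
      have h2' := (h.congr hl).sub hint_const
      refine h2'.congr (Filter.Eventually.of_forall fun x => ?_)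
      simp
    · intro h
      exact (hint_const.add h).congr hl.symm
  have hac_iff : (a • φ) ≪ (b • φu) ↔ φ ≪ φu := by
    constructor
    · intro h s hs
      have h' := h (show (b • φu) s = 0 by simp [Measure.smul_apply, hs])
      simpa [Measure.smul_apply, ha0] using h'
    · intro h s hs
      have hs' : φu s = 0 := by simpa [Measure.smul_apply, hb0] using hs
      simp [Measure.smul_apply, h hs']
  by_cases hc : φ ≪ φu ∧ IntegrableOn (fun ξ => Real.log ((φ.rnDeriv φu) ξ).toReal) Ξ φ
  · have hcΛ : (a • φ) ≪ (b • φu) ∧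
        IntegrableOn (fun ξ => Real.log (((a • φ).rnDeriv (b • φu)) ξ).toReal) Ξ (a • φ) :=
      ⟨hac_iff.mpr hc.1, (hint_iff hc.1).mpr hc.2⟩
    rw [Bprox, if_pos hcΛ, KLdiv, if_pos hc]
    have hsmul_int : ∀ f : E → ℝ, (∫ ξ in Ξ, f ξ ∂(a • φ)) = ρ * ∫ ξ in Ξ, f ξ ∂φ := by
      intro f
      rw [Measure.restrict_smul, integral_smul_measure, haR, smul_eq_mul]
    have hlogI : (∫ ξ in Ξ, Real.log (((a • φ).rnDeriv (b • φu)) ξ).toReal ∂(a • φ))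
        = ρ * (Real.log (ρ / ρ0) + ∫ ξ in Ξ, Real.log ((φ.rnDeriv φu) ξ).toReal ∂φ) := by
      rw [hsmul_int]
      congr 1
      rw [integral_congr_ae (ae_restrict_of_ae (hlog hc.1)), integral_add hint_const hc.2,
        setIntegral_const, measureReal_def, hφΞ1, ENNReal.toReal_one, one_smul]
    rw [hlogI, hsmul_int G, hmassΛ, hmassΛu]
    norm_cast
    simp only [Hfun]
    ring
  · have hcΛ : ¬((a • φ) ≪ (b • φu) ∧
        IntegrableOn (fun ξ => Real.log (((a • φ).rnDeriv (b • φu)) ξ).toReal) Ξ (a • φ)) := by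
      rintro ⟨hh1, hh2⟩
      exact hc ⟨hac_iff.mp hh1, (hint_iff (hac_iff.mp hh1)).mp hh2⟩
    rw [Bprox, if_neg hcΛ, KLdiv, if_neg hc]
    rw [EReal.coe_mul_top_of_pos hκ, EReal.sub_top, EReal.sub_top,
      EReal.coe_mul_bot_of_pos hρ, EReal.bot_sub]

/-- Two-stage decomposition of the inner maximization:
`sup_{Λ ∈ V} { ∫_Ξ G dΛ − κ B(Λ,Λ_u) }
  = sup_{ρ ∈ [0,ρ̄]} { ρ · sup_{φ ∈ P(Ξ)} [ ∫_Ξ G dφ − κ D(φ,φ_u) ] − κ H(ρ,ρ₀) }`,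
where `V = {Λ ∈ M₊(Ξ) : Λ(Ξ) ≤ ρ̄}` and `Λ_u` has constant density `ρ₀/vol(Ξ)`. -/
theorem stmt_11 {d : ℕ} (Ξ : Set (EuclideanSpace ℝ (Fin d))) (hΞcomp : IsCompact Ξ)
    (hvol : 0 < volume Ξ)
    (G : EuclideanSpace ℝ (Fin d) → ℝ) (hG : ContinuousOn G Ξ)
    (κ : ℝ) (hκ : 0 < κ)
    (ρbar ρ0 : ℝ) (hρbar : 0 < ρbar) (hρ0 : ρ0 ∈ Set.Ioc (0 : ℝ) ρbar) :
    -- `Λ_u` : the measure with constant Lebesgue density `ρ₀ / vol(Ξ)` on `Ξ`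
    let Λu : Measure (EuclideanSpace ℝ (Fin d)) :=
      ENNReal.ofReal (ρ0 / (volume Ξ).toReal) • volume.restrict Ξ
    -- `φ_u` : the uniform probability measure on `Ξ`
    let φu : Measure (EuclideanSpace ℝ (Fin d)) := (volume Ξ)⁻¹ • volume.restrict Ξ
    (⨆ (Λ : Measure (EuclideanSpace ℝ (Fin d))) (_ : IsFiniteMeasure Λ) (_ : Λ Ξᶜ = 0)
        (_ : Λ Ξ ≤ ENNReal.ofReal ρbar),
        ((∫ ξ in Ξ, G ξ ∂Λ : ℝ) : EReal) - (κ : EReal) * Bprox Ξ Λ Λu)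
      = ⨆ ρ ∈ Set.Icc (0 : ℝ) ρbar,
          (ρ : EReal) *
              (⨆ (φ : Measure (EuclideanSpace ℝ (Fin d))) (_ : IsProbabilityMeasure φ)
                  (_ : φ Ξᶜ = 0),
                ((∫ ξ in Ξ, G ξ ∂φ : ℝ) : EReal) - (κ : EReal) * KLdiv Ξ φ φu)
            - ((κ * Hfun ρ ρ0 : ℝ) : EReal) := by
  intro Λu φu
  obtain ⟨hρ0pos, hρ0le⟩ := hρ0
  have hΞm : MeasurableSet Ξ := hΞcomp.isClosed.measurableSet
  have hvt : volume Ξ ≠ ⊤ := hΞcomp.measure_lt_top.ne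
  have hv0 : volume Ξ ≠ 0 := hvol.ne'
  have hφu_def : φu = (volume Ξ)⁻¹ • volume.restrict Ξ := rfl
  have hΛu_eq : Λu = ENNReal.ofReal ρ0 • φu := by
    have h1 : Λu = ENNReal.ofReal (ρ0 / (volume Ξ).toReal) • volume.restrict Ξ := rfl
    rw [h1, hφu_def, smul_smul, ENNReal.ofReal_div_of_pos (ENNReal.toReal_pos hv0 hvt),
      ENNReal.ofReal_toReal hvt, div_eq_mul_inv]
  have hφuP : φu univ = 1 := by
    rw [hφu_def]
    simp [Measure.smul_apply, Measure.restrict_apply_univ, ENNReal.inv_mul_cancel hv0 hvt]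
  have hφuΞ : φu Ξᶜ = 0 := by
    rw [hφu_def]
    simp [Measure.smul_apply, Measure.restrict_apply hΞm.compl, compl_inter_self]
  haveI hφu_fin : IsFiniteMeasure φu := ⟨by rw [hφuP]; exact ENNReal.one_lt_top⟩
  have hφuΞ1 : φu Ξ = 1 := by
    have h := measure_add_measure_compl (μ := φu) hΞm
    rw [hφuΞ, add_zero, hφuP] at h; exact h
  -- value of the zero measure
  have hzero : ((∫ ξ in Ξ, G ξ ∂(0 : Measure (EuclideanSpace ℝ (Fin d))) : ℝ) : EReal)
      - (κ : EReal) * Bprox Ξ 0 (ENNReal.ofReal ρ0 • φu) = ((-(κ * ρ0) : ℝ) : EReal) := by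
    have hB : Bprox Ξ (0 : Measure (EuclideanSpace ℝ (Fin d))) (ENNReal.ofReal ρ0 • φu)
        = ((ρ0 : ℝ) : EReal) := by
      rw [Bprox, if_pos ⟨Measure.AbsolutelyContinuous.zero _,
        by rw [IntegrableOn, Measure.restrict_zero]; exact integrable_zero_measure⟩]
      have hm : ((ENNReal.ofReal ρ0 • φu) Ξ).toReal = ρ0 := by
        rw [Measure.smul_apply, smul_eq_mul, hφuΞ1, mul_one, ENNReal.toReal_ofReal hρ0pos.le]
      rw [Measure.restrict_zero, integral_zero_measure, hm]
      norm_num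
    have hI : (∫ ξ in Ξ, G ξ ∂(0 : Measure (EuclideanSpace ℝ (Fin d)))) = 0 := by
      rw [Measure.restrict_zero, integral_zero_measure]
    rw [hB, hI, ← EReal.coe_mul, ← EReal.coe_sub]
    norm_num
  rw [hΛu_eq]
  refine le_antisymm ?_ ?_
  · refine iSup_le fun Λ => iSup_le fun hfin => iSup_le fun hsupp => iSup_le fun hmass => ?_
    haveI := hfin
    by_cases hΛ0 : Λ = 0
    · subst hΛ0
      rw [hzero]
      refine le_iSup_of_le (0 : ℝ) (le_iSup_of_le ⟨le_refl (0 : ℝ), hρbar.le⟩ ?_)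
      have h0 : ((0 : ℝ) : EReal) = 0 := rfl
      rw [h0, zero_mul]
      have hH : Hfun 0 ρ0 = ρ0 := by simp [Hfun]
      rw [hH, sub_eq_add_neg, zero_add, ← EReal.coe_neg]
    · have hΛuniv : Λ univ = Λ Ξ := by
        have h := measure_add_measure_compl (μ := Λ) hΞm
        rw [hsupp, add_zero] at h; exact h.symm
      have hΛ0' : Λ Ξ ≠ 0 := by
        intro h
        exact hΛ0 (Measure.measure_univ_eq_zero.mp (by rw [hΛuniv, h]))
      have hΛt : Λ Ξ ≠ ⊤ := measure_ne_top Λ Ξ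
      set ρ := (Λ Ξ).toReal with hρ_def
      have hρpos : 0 < ρ := ENNReal.toReal_pos hΛ0' hΛt
      have hρle : ρ ≤ ρbar := by
        calc ρ ≤ (ENNReal.ofReal ρbar).toReal := ENNReal.toReal_mono ENNReal.ofReal_ne_top hmass
          _ = ρbar := ENNReal.toReal_ofReal hρbar.le
      set φ : Measure (EuclideanSpace ℝ (Fin d)) := (Λ Ξ)⁻¹ • Λ with hφ_def
      have hφP : φ univ = 1 := by
        rw [hφ_def]
        simp [Measure.smul_apply, hΛuniv, ENNReal.inv_mul_cancel hΛ0' hΛt]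
      have hφΞc : φ Ξᶜ = 0 := by simp [hφ_def, Measure.smul_apply, hsupp]
      haveI hprob : IsProbabilityMeasure φ := ⟨hφP⟩
      have hΛeq : ENNReal.ofReal ρ • φ = Λ := by
        rw [hφ_def, smul_smul, hρ_def, ENNReal.ofReal_toReal hΛt,
          ENNReal.mul_inv_cancel hΛ0' hΛt, one_smul]
      rw [← hΛeq, key_value Ξ hΞm G hκ hρ0pos hρpos φu hφuΞ hφuP φ hφΞc hφP]
      refine le_iSup_of_le ρ (le_iSup_of_le ⟨hρpos.le, hρle⟩ ?_)
      refine EReal.sub_le_sub (mul_le_mul_of_nonneg_left ?_ (by exact_mod_cast hρpos.le)) le_rfl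
      exact le_iSup_of_le φ (le_iSup_of_le hprob (le_iSup_of_le hφΞc le_rfl))
  · refine iSup_le fun ρ => iSup_le fun hmem => ?_
    obtain ⟨hρ0', hρle⟩ := hmem
    rcases eq_or_lt_of_le hρ0' with h0 | hρpos
    · refine le_iSup_of_le 0 (le_iSup_of_le inferInstance
        (le_iSup_of_le (by simp) (le_iSup_of_le (by simp) ?_)))
      rw [hzero, ← h0]
      have h0' : ((0 : ℝ) : EReal) = 0 := rfl
      rw [h0', zero_mul]
      have hH : Hfun 0 ρ0 = ρ0 := by simp [Hfun]
      rw [hH, sub_eq_add_neg, zero_add, ← EReal.coe_neg]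
    · have hdistrib :
          (ρ : EReal) * (⨆ (φ : Measure (EuclideanSpace ℝ (Fin d)))
              (_ : IsProbabilityMeasure φ) (_ : φ Ξᶜ = 0),
              ((∫ ξ in Ξ, G ξ ∂φ : ℝ) : EReal) - (κ : EReal) * KLdiv Ξ φ φu)
            - ((κ * Hfun ρ ρ0 : ℝ) : EReal)
          = ⨆ (φ : Measure (EuclideanSpace ℝ (Fin d))) (_ : IsProbabilityMeasure φ)
              (_ : φ Ξᶜ = 0),
              ((ρ : EReal) * (((∫ ξ in Ξ, G ξ ∂φ : ℝ) : EReal)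
                - (κ : EReal) * KLdiv Ξ φ φu) - ((κ * Hfun ρ ρ0 : ℝ) : EReal)) := by
        rw [ereal_mul_iSup _ hρpos, ereal_iSup_sub]
        refine iSup_congr fun φ => ?_
        rw [ereal_mul_iSup _ hρpos, ereal_iSup_sub]
        refine iSup_congr fun h1 => ?_
        rw [ereal_mul_iSup _ hρpos, ereal_iSup_sub]
      rw [hdistrib]
      refine iSup_le fun φ => iSup_le fun hprob => iSup_le fun hsupp' => ?_
      haveI := hprob
      rw [← key_value Ξ hΞm G hκ hρ0pos hρpos φu hφuΞ hφuP φ hsupp' (measure_univ (μ := φ))]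
      refine le_iSup_of_le (ENNReal.ofReal ρ • φ) (le_iSup_of_le ?_ (le_iSup_of_le ?_
        (le_iSup_of_le ?_ le_rfl)))
      · exact ⟨by
          rw [Measure.smul_apply, smul_eq_mul, measure_univ, mul_one]
          exact ENNReal.ofReal_lt_top⟩
      · rw [Measure.smul_apply, smul_eq_mul, hsupp', mul_zero]
      · calc (ENNReal.ofReal ρ • φ) Ξ = ENNReal.ofReal ρ * φ Ξ := by
              rw [Measure.smul_apply, smul_eq_mul]
          _ ≤ ENNReal.ofReal ρ * 1 := mul_le_mul_right prob_le_one _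
          _ = ENNReal.ofReal ρ := mul_one _
          _ ≤ ENNReal.ofReal ρbar := ENNReal.ofReal_le_ofReal hρle
end
end

section
/- Under the same setup, for any ε > 0 define κ̄(ε) := min{ ε/(2C̄), (ε/(2ρ̄d))², ε/ρ₀, 1 }. Then sup_{Λ∈V} { ∫_Ξ G dΛ − κ̄(ε)·B(Λ, Λ_u) } ≥ sup_{Λ∈V} ∫_Ξ G dΛ − ε. -/
open MeasureTheory Set
open scoped Classical

noncomputable section

/-! ### Auxiliary lemmas -/

lemma aux_log_le_div_exp {y : ℝ} (hy : 0 < y) : Real.log y ≤ y / Real.exp 1 := by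
  have h := Real.log_le_sub_one_of_pos (show 0 < y / Real.exp 1 by positivity)
  rw [Real.log_div hy.ne' (Real.exp_ne_zero 1), Real.log_exp] at h
  linarith

lemma aux_neg_mul_log_le_sqrt {κ : ℝ} (hκ : 0 < κ) : -(κ * Real.log κ) ≤ Real.sqrt κ := by
  have hs : 0 < Real.sqrt κ := Real.sqrt_pos.mpr hκ
  have hss : Real.sqrt κ * Real.sqrt κ = κ := Real.mul_self_sqrt hκ.le
  have hlog : Real.log κ = 2 * Real.log (Real.sqrt κ) := by
    rw [Real.log_sqrt hκ.le]; ring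
  have h1 : Real.log (Real.sqrt κ)⁻¹ ≤ (Real.sqrt κ)⁻¹ / Real.exp 1 :=
    aux_log_le_div_exp (by positivity)
  have h2 : (2:ℝ) ≤ Real.exp 1 := by
    have := Real.add_one_le_exp 1; linarith
  have hdiv : κ * (Real.sqrt κ)⁻¹ = Real.sqrt κ := by
    rw [← hss]; field_simp; rw [Real.sqrt_sq hs.le]
  have h3 : -(κ * Real.log κ) = 2 * (κ * Real.log (Real.sqrt κ)⁻¹) := by
    rw [Real.log_inv, hlog]; ring
  have h4 : κ * Real.log (Real.sqrt κ)⁻¹ ≤ κ * ((Real.sqrt κ)⁻¹ / Real.exp 1) :=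
    mul_le_mul_of_nonneg_left h1 hκ.le
  have h5 : κ * ((Real.sqrt κ)⁻¹ / Real.exp 1) = Real.sqrt κ / Real.exp 1 := by
    rw [div_eq_mul_inv, ← mul_assoc, hdiv, div_eq_mul_inv]
  have h6 : 2 * (Real.sqrt κ / Real.exp 1) ≤ Real.sqrt κ := by
    rw [mul_div_assoc', div_le_iff₀ (by positivity : (0:ℝ) < Real.exp 1)]
    nlinarith [Real.exp_pos 1]
  linarith

lemma aux_Hfun_nonneg {ρ ρ0 : ℝ} (hρ : 0 < ρ) (hρ0 : 0 < ρ0) : 0 ≤ Hfun ρ ρ0 := by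
  rw [Hfun]
  have h := Real.log_le_sub_one_of_pos (show 0 < ρ0 / ρ by positivity)
  have h2 : Real.log (ρ0 / ρ) = - Real.log (ρ / ρ0) := by
    rw [Real.log_div hρ0.ne' hρ.ne', Real.log_div hρ.ne' hρ0.ne']; ring
  rw [h2] at h
  have h3 : ρ * (-Real.log (ρ / ρ0)) ≤ ρ * (ρ0 / ρ - 1) := mul_le_mul_of_nonneg_left h hρ.le
  have h4 : ρ * (ρ0 / ρ - 1) = ρ0 - ρ := by field_simp
  nlinarith

/-- Key computational lemma: properties of the rescaled uniform measure on a subset `S ⊆ Ξ`. -/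
lemma aux_hat_props {d : ℕ} (Ξ S : Set (EuclideanSpace ℝ (Fin d)))
    (hΞm : MeasurableSet Ξ) (hS : MeasurableSet S) (hSsub : S ⊆ Ξ)
    (hvolΞ : 0 < volume Ξ) (hΞfin : volume Ξ < ⊤)
    (hvolS : 0 < volume S) (hSfin : volume S < ⊤)
    {ρbar ρ0 : ℝ} (hρbar : 0 < ρbar) (hρ0 : 0 < ρ0)
    (G : EuclideanSpace ℝ (Fin d) → ℝ) :
    IsFiniteMeasure (ENNReal.ofReal (ρbar / (volume S).toReal) • volume.restrict S) ∧
    (ENNReal.ofReal (ρbar / (volume S).toReal) • volume.restrict S) Ξᶜ = 0 ∧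
    (ENNReal.ofReal (ρbar / (volume S).toReal) • volume.restrict S) Ξ = ENNReal.ofReal ρbar ∧
    Bprox Ξ (ENNReal.ofReal (ρbar / (volume S).toReal) • volume.restrict S)
        (ENNReal.ofReal (ρ0 / (volume Ξ).toReal) • volume.restrict Ξ)
      = ((ρbar * Real.log (ρbar * (volume Ξ).toReal / (ρ0 * (volume S).toReal)) - (ρbar - ρ0) : ℝ) : EReal) ∧
    ∫ ξ in Ξ, G ξ ∂(ENNReal.ofReal (ρbar / (volume S).toReal) • volume.restrict S)
      = (ρbar / (volume S).toReal) * ∫ ξ in S, G ξ ∂volume := by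
  set vΞ := (volume Ξ).toReal with hvΞdef
  set vS := (volume S).toReal with hvSdef
  have hvΞ : 0 < vΞ := ENNReal.toReal_pos hvolΞ.ne' hΞfin.ne
  have hvS : 0 < vS := ENNReal.toReal_pos hvolS.ne' hSfin.ne
  set Λu : Measure (EuclideanSpace ℝ (Fin d)) := ENNReal.ofReal (ρ0 / vΞ) • volume.restrict Ξ with hΛu
  set Λh : Measure (EuclideanSpace ℝ (Fin d)) := ENNReal.ofReal (ρbar / vS) • volume.restrict S with hΛh
  set α : ℝ := ρbar * vΞ / (ρ0 * vS) with hαdef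
  have hα : 0 < α := by positivity
  have hrestr : ∀ t : Set (EuclideanSpace ℝ (Fin d)), MeasurableSet t →
      Λh t = ENNReal.ofReal (ρbar / vS) * volume (t ∩ S) := by
    intro t ht
    rw [hΛh, Measure.smul_apply, Measure.restrict_apply ht, smul_eq_mul]
  have hΛhΞc : Λh Ξᶜ = 0 := by
    rw [hrestr _ hΞm.compl]
    have : Ξᶜ ∩ S = ∅ := by
      ext x
      simp only [mem_inter_iff, mem_compl_iff, mem_empty_iff_false, iff_false, not_and]
      intro hx hxS
      exact hx (hSsub hxS)
    rw [this, measure_empty, mul_zero]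
  have hSvol : ENNReal.ofReal (ρbar / vS) * volume S = ENNReal.ofReal ρbar := by
    rw [← ENNReal.ofReal_toReal hSfin.ne, ← hvSdef, ← ENNReal.ofReal_mul (by positivity),
      div_mul_cancel₀ _ hvS.ne']
  have hΛhΞ : Λh Ξ = ENNReal.ofReal ρbar := by
    rw [hrestr _ hΞm, inter_eq_self_of_subset_right hSsub, hSvol]
  have hΛhuniv : Λh univ = ENNReal.ofReal ρbar := by
    rw [hrestr _ MeasurableSet.univ, univ_inter, hSvol]
  have hfin : IsFiniteMeasure Λh := ⟨by rw [hΛhuniv]; exact ENNReal.ofReal_lt_top⟩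
  haveI := hfin
  have hΛuuniv : Λu univ = ENNReal.ofReal ρ0 := by
    rw [hΛu, Measure.smul_apply, Measure.restrict_apply MeasurableSet.univ, univ_inter,
      smul_eq_mul, ← ENNReal.ofReal_toReal hΞfin.ne, ← hvΞdef,
      ← ENNReal.ofReal_mul (by positivity), div_mul_cancel₀ _ hvΞ.ne']
  have hΛuΞ : Λu Ξ = ENNReal.ofReal ρ0 := by
    rw [hΛu, Measure.smul_apply, Measure.restrict_apply hΞm, inter_self, smul_eq_mul,
      ← ENNReal.ofReal_toReal hΞfin.ne, ← hvΞdef,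
      ← ENNReal.ofReal_mul (by positivity), div_mul_cancel₀ _ hvΞ.ne']
  haveI : IsFiniteMeasure Λu := ⟨by rw [hΛuuniv]; exact ENNReal.ofReal_lt_top⟩
  set f : EuclideanSpace ℝ (Fin d) → ENNReal := S.indicator (fun _ => ENNReal.ofReal α) with hfdef
  have hfmeas : Measurable f := measurable_const.indicator hS
  have hkey : Λu.withDensity f = Λh := by
    rw [hΛu, hfdef, withDensity_smul_measure, withDensity_indicator hS,
      Measure.restrict_restrict hS, inter_eq_self_of_subset_left hSsub, withDensity_const,
      smul_smul, ← ENNReal.ofReal_mul (by positivity)]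
    congr 1
    rw [hαdef]
    field_simp
  have hac : Λh ≪ Λu := hkey ▸ withDensity_absolutelyContinuous Λu f
  have hrn : Λh.rnDeriv Λu =ᵐ[Λu] f := by
    conv_lhs => rw [← hkey]
    exact Measure.rnDeriv_withDensity Λu hfmeas
  have hrnh : Λh.rnDeriv Λu =ᵐ[Λh] f := hrn.filter_mono hac.ae_le
  have hmemS : ∀ᵐ ξ ∂Λh, ξ ∈ S := by
    rw [ae_iff]
    have : {a | ¬ a ∈ S} = Sᶜ := rfl
    rw [this, hrestr _ hS.compl, compl_inter_self, measure_empty, mul_zero]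
  have heq : (fun ξ => Real.log (Λh.rnDeriv Λu ξ).toReal) =ᵐ[Λh] (fun _ => Real.log α) := by
    filter_upwards [hrnh, hmemS] with ξ h1 h2
    rw [h1, hfdef, Set.indicator_of_mem h2, ENNReal.toReal_ofReal hα.le]
  have hres : Λh.restrict Ξ = Λh := by
    apply Measure.restrict_eq_self_of_ae_mem
    rw [ae_iff]
    have : {a | ¬ a ∈ Ξ} = Ξᶜ := rfl
    rw [this, hΛhΞc]
  have hint : IntegrableOn (fun ξ => Real.log (Λh.rnDeriv Λu ξ).toReal) Ξ Λh := by
    rw [IntegrableOn, hres]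
    exact (integrable_const (Real.log α)).congr heq.symm
  have hival : ∫ ξ in Ξ, Real.log (Λh.rnDeriv Λu ξ).toReal ∂Λh = ρbar * Real.log α := by
    rw [hres, integral_congr_ae heq, integral_const, measureReal_def, hΛhuniv,
      ENNReal.toReal_ofReal hρbar.le, smul_eq_mul]
  refine ⟨hfin, hΛhΞc, hΛhΞ, ?_, ?_⟩
  · rw [Bprox, if_pos ⟨hac, hint⟩, hival, hΛhΞ, hΛuΞ,
      ENNReal.toReal_ofReal hρbar.le, ENNReal.toReal_ofReal hρ0.le]
  · have h0 : ∫ ξ in Ξ, G ξ ∂Λh = ∫ ξ, G ξ ∂Λh := by rw [hres]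
    rw [h0, hΛh, integral_smul_measure, ENNReal.toReal_ofReal (by positivity), smul_eq_mul]
set_option maxHeartbeats 1600000 in
/-- With the regularization parameter `κ̄(ε) = min{ ε/(2C̄), (ε/(2ρ̄d))², ε/ρ₀, 1 }`,
the regularized inner maximization is within `ε` of the unregularized one:
`sup_{Λ∈V} { ∫_Ξ G dΛ − κ̄(ε) B(Λ,Λ_u) } ≥ sup_{Λ∈V} ∫_Ξ G dΛ − ε`. -/
theorem stmt_13 {d : ℕ} (Ξ : Set (EuclideanSpace ℝ (Fin d)))
    (hΞconv : Convex ℝ Ξ) (hΞcomp : IsCompact Ξ) (hvol : 0 < volume Ξ)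
    (ξt : EuclideanSpace ℝ (Fin d)) (hξt : ξt ∈ Ξ)
    (R : ℝ) (hR : 0 < R) (hball : Metric.closedBall ξt R ⊆ Ξ)
    (G : EuclideanSpace ℝ (Fin d) → ℝ) (hGcont : ContinuousOn G Ξ)
    (L : ℝ) (hLip : ∀ ξ ∈ Ξ, ∀ ζ ∈ Ξ, |G ξ - G ζ| ≤ L * ‖ξ - ζ‖)
    (ρbar ρ0 : ℝ) (hρbar : 0 < ρbar) (hρ0 : ρ0 ∈ Set.Ioc (0 : ℝ) ρbar)
    (ε : ℝ) (hε : 0 < ε) :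
    -- `Λ_u` : the measure with constant Lebesgue density `ρ₀ / vol(Ξ)` on `Ξ`
    let Λu : Measure (EuclideanSpace ℝ (Fin d)) :=
      ENNReal.ofReal (ρ0 / (volume Ξ).toReal) • volume.restrict Ξ
    -- `r` : volume ratio of the ball `B_R(ξt)` and `Ξ`
    let r : ℝ := (volume (Metric.closedBall ξt R)).toReal / (volume Ξ).toReal
    -- `H_max = max_{ρ ∈ [0,ρ̄]} H(ρ,ρ₀)`
    let Hmax : ℝ := sSup ((fun ρ => Hfun ρ ρ0) '' Set.Icc 0 ρbar)
    -- `C̄ = ρ̄ L (R + D_Ξ) − ρ̄ log r + H_max`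
    let Cbar : ℝ := ρbar * (L * (R + Metric.diam Ξ)) - ρbar * Real.log r + Hmax
    -- `κ̄(ε)`
    let κbar : ℝ := min (min (ε / (2 * Cbar)) ((ε / (2 * ρbar * d)) ^ 2)) (min (ε / ρ0) 1)
    (⨆ (Λ : Measure (EuclideanSpace ℝ (Fin d))) (_ : IsFiniteMeasure Λ) (_ : Λ Ξᶜ = 0)
          (_ : Λ Ξ ≤ ENNReal.ofReal ρbar), ((∫ ξ in Ξ, G ξ ∂Λ : ℝ) : EReal))
        - (ε : EReal)
      ≤ ⨆ (Λ : Measure (EuclideanSpace ℝ (Fin d))) (_ : IsFiniteMeasure Λ) (_ : Λ Ξᶜ = 0)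
          (_ : Λ Ξ ≤ ENNReal.ofReal ρbar),
          ((∫ ξ in Ξ, G ξ ∂Λ : ℝ) : EReal) - (κbar : EReal) * Bprox Ξ Λ Λu := by
  intro Λu r Hmax Cbar κbar
  obtain ⟨hρ0pos, hρ0le⟩ := hρ0
  have hΞm : MeasurableSet Ξ := hΞcomp.isClosed.measurableSet
  have hΞfin : volume Ξ < ⊤ := hΞcomp.measure_lt_top
  have hvΞ : 0 < (volume Ξ).toReal := ENNReal.toReal_pos hvol.ne' hΞfin.ne
  obtain ⟨ξs, hξs, hmaxon⟩ := hΞcomp.exists_isMaxOn ⟨ξt, hξt⟩ hGcont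
  have hGmax : ∀ ξ ∈ Ξ, G ξ ≤ G ξs := hmaxon
  set M : ℝ := G ξs with hMdef
  set X : ℝ := max 0 (ρbar * M) with hXdef
  -- bounds on Hmax
  have hbdd : BddAbove ((fun ρ => Hfun ρ ρ0) '' Set.Icc 0 ρbar) := by
    refine ⟨ρbar * (ρbar / ρ0) + ρ0, ?_⟩
    rintro y ⟨ρ, ⟨hρl, hρu⟩, rfl⟩
    have hlog : Real.log (ρ / ρ0) ≤ ρbar / ρ0 := by
      rcases eq_or_lt_of_le hρl with h | h
      · rw [← h]
        simp only [zero_div, Real.log_zero]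
        positivity
      · refine (Real.log_le_sub_one_of_pos (by positivity)).trans ?_
        have : ρ / ρ0 ≤ ρbar / ρ0 := by gcongr
        linarith
    simp only [Hfun]
    nlinarith [mul_le_mul_of_nonneg_left hlog hρl,
      mul_le_mul_of_nonneg_right hρu (div_nonneg hρbar.le hρ0pos.le)]
  have hHmax0 : ρ0 ≤ Hmax :=
    le_csSup hbdd ⟨0, ⟨le_rfl, hρbar.le⟩, by simp [Hfun]⟩
  have hHmaxρbar : Hfun ρbar ρ0 ≤ Hmax :=
    le_csSup hbdd ⟨ρbar, ⟨hρbar.le, le_rfl⟩, rfl⟩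
  -- κbar component bounds
  have hκle1 : κbar ≤ 1 := le_trans (min_le_right _ _) (min_le_right _ _)
  have hκρ0 : κbar ≤ ε / ρ0 := le_trans (min_le_right _ _) (min_le_left _ _)
  have hκρ0' : κbar * ρ0 ≤ ε := (le_div_iff₀ hρ0pos).mp hκρ0
  -- value of Λu on Ξ
  have hΛuΞ : Λu Ξ = ENNReal.ofReal ρ0 := by
    show (ENNReal.ofReal (ρ0 / (volume Ξ).toReal) • volume.restrict Ξ) Ξ = ENNReal.ofReal ρ0
    rw [Measure.smul_apply, Measure.restrict_apply hΞm, inter_self, smul_eq_mul,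
      ENNReal.ofReal_div_of_pos hvΞ, ENNReal.ofReal_toReal hΞfin.ne,
      ENNReal.div_mul_cancel hvol.ne' hΞfin.ne]
  -- Step 1: upper bound on the unregularized supremum
  have hLHS : (⨆ (Λ : Measure (EuclideanSpace ℝ (Fin d))) (_ : IsFiniteMeasure Λ)
      (_ : Λ Ξᶜ = 0) (_ : Λ Ξ ≤ ENNReal.ofReal ρbar), ((∫ ξ in Ξ, G ξ ∂Λ : ℝ) : EReal))
      ≤ ((X : ℝ) : EReal) := by
    refine iSup_le fun Λ => iSup_le fun hfin => iSup_le fun hc => iSup_le fun hb => ?_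
    rw [EReal.coe_le_coe_iff]
    haveI := hfin
    have hGint : IntegrableOn G Ξ Λ := hGcont.integrableOn_compact hΞcomp
    have hub : ∫ ξ in Ξ, G ξ ∂Λ ≤ ∫ _ in Ξ, M ∂Λ :=
      setIntegral_mono_on hGint ((integrableOn_const_iff).mpr (Or.inr (measure_lt_top Λ Ξ))) hΞm hGmax
    rw [setIntegral_const, smul_eq_mul] at hub
    have hΛρ : (Λ Ξ).toReal ≤ ρbar := ENNReal.toReal_le_of_le_ofReal hρbar.le hb
    rcases le_or_gt 0 M with hM0 | hM0
    · calc ∫ ξ in Ξ, G ξ ∂Λ ≤ (Λ Ξ).toReal * M := hub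
        _ ≤ ρbar * M := mul_le_mul_of_nonneg_right hΛρ hM0
        _ ≤ X := le_max_right _ _
    · calc ∫ ξ in Ξ, G ξ ∂Λ ≤ (Λ Ξ).toReal * M := hub
        _ ≤ 0 := mul_nonpos_of_nonneg_of_nonpos ENNReal.toReal_nonneg hM0.le
        _ ≤ X := le_max_left _ _
  -- Step 2: lower bound on the regularized supremum
  have hRHS : ((X - ε : ℝ) : EReal)
      ≤ ⨆ (Λ : Measure (EuclideanSpace ℝ (Fin d))) (_ : IsFiniteMeasure Λ) (_ : Λ Ξᶜ = 0)
          (_ : Λ Ξ ≤ ENNReal.ofReal ρbar),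
          ((∫ ξ in Ξ, G ξ ∂Λ : ℝ) : EReal) - (κbar : EReal) * Bprox Ξ Λ Λu := by
    rcases le_or_gt M 0 with hMneg | hMpos
    · -- use the zero measure
      have hX0 : X = 0 := max_eq_left (mul_nonpos_of_nonneg_of_nonpos hρbar.le hMneg)
      have hzac : (0 : Measure (EuclideanSpace ℝ (Fin d))) ≪ Λu :=
        Measure.AbsolutelyContinuous.mk fun s _ _ => by simp
      have hzint : IntegrableOn
          (fun ξ => Real.log (((0 : Measure (EuclideanSpace ℝ (Fin d))).rnDeriv Λu) ξ).toReal) Ξ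
          (0 : Measure (EuclideanSpace ℝ (Fin d))) := by
        rw [IntegrableOn, Measure.restrict_zero]
        exact integrable_zero_measure
      have hB0 : Bprox Ξ (0 : Measure (EuclideanSpace ℝ (Fin d))) Λu = ((ρ0 : ℝ) : EReal) := by
        rw [Bprox, if_pos ⟨hzac, hzint⟩]
        norm_num [Measure.restrict_zero, hΛuΞ, ENNReal.toReal_ofReal hρ0pos.le]
      refine le_trans ?_ (le_iSup_of_le (0 : Measure (EuclideanSpace ℝ (Fin d)))
        (le_iSup_of_le inferInstance (le_iSup_of_le (by simp) (le_iSup_of_le zero_le le_rfl))))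
      rw [hB0]
      have hz : (∫ ξ in Ξ, G ξ ∂(0 : Measure (EuclideanSpace ℝ (Fin d))) : ℝ) = 0 := by
        rw [Measure.restrict_zero, integral_zero_measure]
      rw [hz, ← EReal.coe_mul, ← EReal.coe_sub, EReal.coe_le_coe_iff]
      rw [hX0]
      linarith
    · -- M > 0
      rcases Nat.eq_zero_or_pos d with hd | hd
      · -- d = 0 : here κbar ≤ 0 and the uniform measure on Ξ is exact
        subst hd
        have hκ0 : κbar ≤ 0 := by
          have h1 : κbar ≤ (ε / (2 * ρbar * ((0:ℕ):ℝ))) ^ 2 :=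
            le_trans (min_le_left _ _) (min_le_right _ _)
          simpa using h1
        obtain ⟨hfinh, hch, hbh, hBval, hIval⟩ :=
          aux_hat_props Ξ Ξ hΞm hΞm subset_rfl hvol hΞfin hvol hΞfin hρbar hρ0pos G
        refine le_trans ?_ (le_iSup_of_le _ (le_iSup_of_le hfinh
          (le_iSup_of_le hch (le_iSup_of_le (le_of_eq hbh) le_rfl))))
        have hGconst : ∫ ξ in Ξ, G ξ ∂volume = (volume Ξ).toReal * M := by
          have hc : ∀ ξ : EuclideanSpace ℝ (Fin 0), G ξ = M := fun ξ => by
            rw [hMdef]; exact congrArg G (Subsingleton.elim ξ ξs)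
          simp only [hc]
          rw [setIntegral_const, smul_eq_mul, measureReal_def]
        have harg : ρbar * (volume Ξ).toReal / (ρ0 * (volume Ξ).toReal) = ρbar / ρ0 := by
          rw [mul_comm ρbar ((volume Ξ).toReal), mul_comm ρ0 ((volume Ξ).toReal),
            mul_div_mul_left _ _ hvΞ.ne']
        rw [hIval, hBval, hGconst, harg]
        have hIeq : ρbar / (volume Ξ).toReal * ((volume Ξ).toReal * M) = ρbar * M := by
          field_simp
        rw [hIeq, ← EReal.coe_mul, ← EReal.coe_sub, EReal.coe_le_coe_iff]
        have hXeq : X = ρbar * M := max_eq_right (mul_pos hρbar hMpos).le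
        have hHnn : 0 ≤ ρbar * Real.log (ρbar / ρ0) - ρbar + ρ0 := aux_Hfun_nonneg hρbar hρ0pos
        have hmn : κbar * (ρbar * Real.log (ρbar / ρ0) - (ρbar - ρ0)) ≤ 0 :=
          mul_nonpos_of_nonpos_of_nonneg hκ0 (by linarith)
        rw [hXeq]; linarith
      · -- 1 ≤ d : the main construction with a shrunken ball near the maximizer
        have hdpos : (0:ℝ) < (d:ℝ) := by exact_mod_cast hd
        have hL0 : 0 ≤ L := by
          set p : EuclideanSpace ℝ (Fin d) := ξt + EuclideanSpace.single (⟨0, hd⟩ : Fin d) R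
            with hp
          have hpnorm : ‖p - ξt‖ = R := by
            rw [hp, add_sub_cancel_left, EuclideanSpace.norm_single, Real.norm_eq_abs,
              abs_of_pos hR]
          have hpΞ : p ∈ Ξ := hball (by rw [Metric.mem_closedBall, dist_eq_norm, hpnorm])
          have h := hLip p hpΞ ξt hξt
          rw [hpnorm] at h
          nlinarith [abs_nonneg (G p - G ξt)]
        have hD0 : 0 ≤ Metric.diam Ξ := Metric.diam_nonneg
        have hdist : ‖ξt - ξs‖ ≤ Metric.diam Ξ := by
          rw [← dist_eq_norm]; exact Metric.dist_le_diam_of_mem hΞcomp.isBounded hξt hξs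
        have hBfin : volume (Metric.closedBall ξt R) < ⊤ :=
          (isCompact_closedBall ξt R).measure_lt_top
        have hBpos : (0:ENNReal) < volume (Metric.closedBall ξt R) :=
          Metric.measure_closedBall_pos volume ξt hR
        have hvB : 0 < (volume (Metric.closedBall ξt R)).toReal :=
          ENNReal.toReal_pos hBpos.ne' hBfin.ne
        have hrdef : r = (volume (Metric.closedBall ξt R)).toReal / (volume Ξ).toReal := rfl
        have hrpos : 0 < r := hrdef ▸ div_pos hvB hvΞ
        have hrle1 : r ≤ 1 := by
          rw [hrdef, div_le_one hvΞ]
          exact ENNReal.toReal_mono hΞfin.ne (measure_mono hball)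
        have hlogr : Real.log r ≤ 0 := Real.log_nonpos hrpos.le hrle1
        have hCdef : Cbar = ρbar * (L * (R + Metric.diam Ξ)) - ρbar * Real.log r + Hmax := rfl
        have hCbar : 0 < Cbar := by
          rw [hCdef]
          have t1 : 0 ≤ ρbar * (L * (R + Metric.diam Ξ)) :=
            mul_nonneg hρbar.le (mul_nonneg hL0 (by linarith))
          have t2 : ρbar * Real.log r ≤ 0 := mul_nonpos_of_nonneg_of_nonpos hρbar.le hlogr
          linarith
        have hκpos : 0 < κbar :=
          lt_min (lt_min (div_pos hε (by linarith))
              (pow_pos (div_pos hε (mul_pos (mul_pos two_pos hρbar) hdpos)) 2))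
            (lt_min (div_pos hε hρ0pos) one_pos)
        have hκC : κbar ≤ ε / (2 * Cbar) := le_trans (min_le_left _ _) (min_le_left _ _)
        have hκCbar : κbar * Cbar ≤ ε / 2 := by
          rw [le_div_iff₀ (by linarith : (0:ℝ) < 2 * Cbar)] at hκC
          nlinarith
        have hκsq : κbar ≤ (ε / (2 * ρbar * d)) ^ 2 :=
          le_trans (min_le_left _ _) (min_le_right _ _)
        have hsqrt : Real.sqrt κbar ≤ ε / (2 * ρbar * d) := by
          have h := Real.sqrt_le_sqrt hκsq
          rwa [Real.sqrt_sq (le_of_lt (div_pos hε (mul_pos (mul_pos two_pos hρbar) hdpos)))] at h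
        have hκlog : -(κbar * Real.log κbar) ≤ Real.sqrt κbar := aux_neg_mul_log_le_sqrt hκpos
        -- the shrunken ball S
        set z : EuclideanSpace ℝ (Fin d) := ξs + κbar • (ξt - ξs) with hz
        have hκR : 0 < κbar * R := mul_pos hκpos hR
        have hSsub : Metric.closedBall z (κbar * R) ⊆ Ξ := by
          intro y hy
          rw [Metric.mem_closedBall, dist_eq_norm] at hy
          set b : EuclideanSpace ℝ (Fin d) := ξt + κbar⁻¹ • (y - z) with hb
          have hbΞ : b ∈ Ξ := by
            apply hball
            rw [Metric.mem_closedBall, dist_eq_norm, hb, add_sub_cancel_left, norm_smul,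
              norm_inv, Real.norm_eq_abs, abs_of_pos hκpos, inv_mul_le_iff₀ hκpos]
            exact hy
          have hmem := hΞconv hξs hbΞ (by linarith : (0:ℝ) ≤ 1 - κbar) hκpos.le (by ring)
          have hyeq : (1 - κbar) • ξs + κbar • b = y := by
            rw [hb, smul_add, smul_smul, mul_inv_cancel₀ hκpos.ne', one_smul, hz]
            module
          rwa [hyeq] at hmem
        have hGlow : ∀ ξ ∈ Metric.closedBall z (κbar * R),
            M - L * (κbar * (R + Metric.diam Ξ)) ≤ G ξ := by
          intro ξ hξ
          have hξΞ := hSsub hξ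
          rw [Metric.mem_closedBall, dist_eq_norm] at hξ
          have h2 : ‖z - ξs‖ = κbar * ‖ξt - ξs‖ := by
            rw [hz, add_sub_cancel_left, norm_smul, Real.norm_eq_abs, abs_of_pos hκpos]
          have h1 : ‖ξ - ξs‖ ≤ κbar * R + κbar * Metric.diam Ξ := by
            calc ‖ξ - ξs‖ = ‖(ξ - z) + (z - ξs)‖ := by rw [sub_add_sub_cancel]
              _ ≤ ‖ξ - z‖ + ‖z - ξs‖ := norm_add_le _ _
              _ ≤ κbar * R + κbar * Metric.diam Ξ := by
                  rw [h2]
                  exact add_le_add hξ (mul_le_mul_of_nonneg_left hdist hκpos.le)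
          have h := hLip ξ hξΞ ξs hξs
          have h3 : L * ‖ξ - ξs‖ ≤ L * (κbar * (R + Metric.diam Ξ)) := by
            apply mul_le_mul_of_nonneg_left _ hL0
            calc ‖ξ - ξs‖ ≤ κbar * R + κbar * Metric.diam Ξ := h1
              _ = κbar * (R + Metric.diam Ξ) := by ring
          have h4 := abs_le.mp (h.trans h3)
          have h5 := h4.1
          rw [hMdef]
          linarith
        have hScomp : IsCompact (Metric.closedBall z (κbar * R)) := isCompact_closedBall z _
        have hSm : MeasurableSet (Metric.closedBall z (κbar * R)) := measurableSet_closedBall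
        have hSfin : volume (Metric.closedBall z (κbar * R)) < ⊤ := hScomp.measure_lt_top
        have hSpos : (0:ENNReal) < volume (Metric.closedBall z (κbar * R)) :=
          Metric.measure_closedBall_pos volume z hκR
        have hvS : 0 < (volume (Metric.closedBall z (κbar * R))).toReal :=
          ENNReal.toReal_pos hSpos.ne' hSfin.ne
        have hballvol : ∀ (c : EuclideanSpace ℝ (Fin d)) (ρ : ℝ), 0 ≤ ρ →
            volume (Metric.closedBall c ρ)
              = ENNReal.ofReal (ρ ^ d) * volume (Metric.ball (0 : EuclideanSpace ℝ (Fin d)) 1) := by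
          intro c ρ hρ'
          rw [Measure.addHaar_closedBall volume c hρ', finrank_euclideanSpace_fin]
        have hvS_eq : (volume (Metric.closedBall z (κbar * R))).toReal
            = κbar ^ d * (volume (Metric.closedBall ξt R)).toReal := by
          rw [hballvol z (κbar * R) hκR.le, hballvol ξt R hR.le, ENNReal.toReal_mul,
            ENNReal.toReal_mul, ENNReal.toReal_ofReal (pow_nonneg hκR.le d),
            ENNReal.toReal_ofReal (pow_nonneg hR.le d), mul_pow]
          ring
        obtain ⟨hfinh, hch, hbh, hBval, hIval⟩ :=
          aux_hat_props Ξ (Metric.closedBall z (κbar * R)) hΞm hSm hSsub hvol hΞfin hSpos hSfin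
            hρbar hρ0pos G
        refine le_trans ?_ (le_iSup_of_le _ (le_iSup_of_le hfinh
          (le_iSup_of_le hch (le_iSup_of_le (le_of_eq hbh) le_rfl))))
        rw [hIval, hBval, ← EReal.coe_mul, ← EReal.coe_sub, EReal.coe_le_coe_iff]
        set vS := (volume (Metric.closedBall z (κbar * R))).toReal with hvSd
        set vB := (volume (Metric.closedBall ξt R)).toReal with hvBd
        set vXi := (volume Ξ).toReal with hvXid
        -- lower bound for the integral of G over S
        have hGintS : IntegrableOn G (Metric.closedBall z (κbar * R)) volume :=
          (hGcont.mono hSsub).integrableOn_compact hScomp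
        have hintlow : vS * (M - L * (κbar * (R + Metric.diam Ξ)))
            ≤ ∫ ξ in Metric.closedBall z (κbar * R), G ξ ∂volume := by
          have h := setIntegral_mono_on
            ((integrableOn_const_iff).mpr (Or.inr hSfin)) hGintS hSm hGlow
          rwa [setIntegral_const, smul_eq_mul] at h
        have hIlow : ρbar * (M - L * (κbar * (R + Metric.diam Ξ)))
            ≤ ρbar / vS * ∫ ξ in Metric.closedBall z (κbar * R), G ξ ∂volume := by
          have h := mul_le_mul_of_nonneg_left hintlow (le_of_lt (div_pos hρbar hvS))
          calc ρbar * (M - L * (κbar * (R + Metric.diam Ξ)))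
              = ρbar / vS * (vS * (M - L * (κbar * (R + Metric.diam Ξ)))) := by
                field_simp
            _ ≤ _ := h
        -- rewrite the Bprox value
        have hlogb : ρbar * Real.log (ρbar * vXi / (ρ0 * vS)) - (ρbar - ρ0)
            = Hfun ρbar ρ0 - ρbar * Real.log r - ρbar * ((d:ℝ) * Real.log κbar) := by
          have e1 : ρbar * vXi / (ρ0 * vS) = (ρbar / ρ0) * ((vXi / vB) * (κbar ^ d)⁻¹) := by
            rw [hvS_eq, ← one_div, div_mul_div_comm, div_mul_div_comm]
            congr 1 <;> ring
          have e2 : Real.log (vXi / vB) = - Real.log r := by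
            rw [hrdef, Real.log_div hvΞ.ne' hvB.ne', Real.log_div hvB.ne' hvΞ.ne']; ring
          rw [e1, Real.log_mul (div_pos hρbar hρ0pos).ne'
              (mul_ne_zero (div_pos hvΞ hvB).ne' (inv_pos.mpr (pow_pos hκpos d)).ne'),
            Real.log_mul (div_pos hvΞ hvB).ne' (inv_pos.mpr (pow_pos hκpos d)).ne',
            Real.log_inv, Real.log_pow, e2, Hfun]
          ring
        have hXeq : X = ρbar * M := max_eq_right (mul_pos hρbar hMpos).le
        have hsum2 : ρbar * (d:ℝ) * (-(κbar * Real.log κbar)) ≤ ε / 2 := by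
          have hnn : (0:ℝ) ≤ ρbar * (d:ℝ) := mul_nonneg hρbar.le (Nat.cast_nonneg d)
          have s1 : ρbar * (d:ℝ) * (-(κbar * Real.log κbar)) ≤ ρbar * (d:ℝ) * Real.sqrt κbar :=
            mul_le_mul_of_nonneg_left hκlog hnn
          have s2 : ρbar * (d:ℝ) * Real.sqrt κbar ≤ ρbar * (d:ℝ) * (ε / (2 * ρbar * d)) :=
            mul_le_mul_of_nonneg_left hsqrt hnn
          have s3 : ρbar * (d:ℝ) * (ε / (2 * ρbar * (d:ℝ))) = ε / 2 := by
            rw [eq_div_iff (two_ne_zero)]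
            field_simp
          linarith
        have hbub : κbar * (Hfun ρbar ρ0 - ρbar * Real.log r - ρbar * ((d:ℝ) * Real.log κbar))
            ≤ κbar * (Hmax - ρbar * Real.log r) + ρbar * (d:ℝ) * (-(κbar * Real.log κbar)) := by
          have e : κbar * (Hfun ρbar ρ0 - ρbar * Real.log r - ρbar * ((d:ℝ) * Real.log κbar))
              = κbar * Hfun ρbar ρ0 - κbar * (ρbar * Real.log r)
                + ρbar * (d:ℝ) * (-(κbar * Real.log κbar)) := by ring
          have e2 : κbar * (Hmax - ρbar * Real.log r)
              = κbar * Hmax - κbar * (ρbar * Real.log r) := by ring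
          have e3 : κbar * Hfun ρbar ρ0 ≤ κbar * Hmax :=
            mul_le_mul_of_nonneg_left hHmaxρbar hκpos.le
          linarith
        have hCineq : κbar * (Hmax - ρbar * Real.log r)
            + κbar * (ρbar * (L * (R + Metric.diam Ξ))) = κbar * Cbar := by
          rw [hCdef]; ring
        have hre : ρbar * (L * (κbar * (R + Metric.diam Ξ)))
            = κbar * (ρbar * (L * (R + Metric.diam Ξ))) := by ring
        rw [hXeq, hlogb]
        linarith [hIlow, hbub, hκCbar, hsum2, hCineq, hre]
  calc (⨆ (Λ : Measure (EuclideanSpace ℝ (Fin d))) (_ : IsFiniteMeasure Λ) (_ : Λ Ξᶜ = 0)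
          (_ : Λ Ξ ≤ ENNReal.ofReal ρbar), ((∫ ξ in Ξ, G ξ ∂Λ : ℝ) : EReal)) - (ε : EReal)
      ≤ ((X : ℝ) : EReal) - ((ε : ℝ) : EReal) := EReal.sub_le_sub hLHS le_rfl
    _ = ((X - ε : ℝ) : EReal) := (EReal.coe_sub _ _).symm
    _ ≤ _ := hRHS
end
end

section
/- Let X ⊂ ℝ^m be convex compact, f : X → ℝ convex continuous, Ξ ⊂ ℝ^d compact with vol(Ξ) > 0, and g : X × Ξ → ℝ continuous with x ↦ g(x,ξ) convex for each ξ. Let κ ∈ (0,1], ρ̄ > 0, ρ₀ ∈ (0, ρ̄], Λ_u the measure with constant Lebesgue density ρ₀/vol(Ξ), V := {Λ ∈ M₊(Ξ) : Λ(Ξ) ≤ ρ̄}, and define the regularized Lagrangian L_κ(x,Λ) := f(x) + ∫_Ξ g(x,ξ) dΛ(ξ) − κ·B(Λ, Λ_u). Then there exists a saddle point (x*_κ, Λ*_κ) ∈ X × V of L_κ, i.e. L_κ(x*_κ, Λ) ≤ L_κ(x*_κ, Λ*_κ) ≤ L_κ(x, Λ*_κ) for all (x, Λ) ∈ X × V,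 and min_{x∈X} sup_{Λ∈V} L_κ(x,Λ) = sup_{Λ∈V} min_{x∈X} L_κ(x,Λ) = L_κ(x*_κ, Λ*_κ). -/
open MeasureTheory Set Metric Filter
open scoped Classical ENNReal NNReal Topology

noncomputable section

section Auxiliary

lemma pointwise_gibbs {κ a lam y : ℝ} (hκ : 0 < κ) (hy : 0 ≤ y) (hlam : 0 ≤ lam) :
    y * a - κ * (y * Real.log y) + κ * y ≤ κ * Real.exp ((a - lam) / κ) + lam * y := by
  rcases eq_or_lt_of_le hy with h0 | hy0
  · rw [← h0]; simp [mul_nonneg hκ.le (Real.exp_pos _).le]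
  · have key : ((a - lam) / κ - Real.log y) + 1 ≤ Real.exp ((a - lam) / κ - Real.log y) :=
      Real.add_one_le_exp _
    have hexp : Real.exp ((a - lam) / κ - Real.log y) = Real.exp ((a - lam) / κ) / y := by
      rw [Real.exp_sub, Real.exp_log hy0]
    rw [hexp] at key
    have := mul_le_mul_of_nonneg_left key (mul_nonneg hκ.le hy : (0:ℝ) ≤ κ * y)
    have hne : y ≠ 0 := ne_of_gt hy0
    have h1 : κ * y * (Real.exp ((a - lam)/κ) / y) = κ * Real.exp ((a-lam)/κ) := by
      field_simp
    have h2 : κ * y * ((a - lam) / κ - Real.log y + 1) =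
        y * (a - lam) - κ * (y * Real.log y) + κ * y := by
      field_simp
    rw [h1, h2] at this
    nlinarith [this]

lemma gibbs_bound {α : Type*} [MeasurableSpace α] (μ Λ : Measure α) [IsFiniteMeasure μ]
    [IsFiniteMeasure Λ] (hΛμ : Λ ≪ μ) {G : α → ℝ} (hGm : Measurable G) {K : ℝ}
    (hGb : ∀ᵐ ξ ∂μ, |G ξ| ≤ K) {κ lam : ℝ} (hκ : 0 < κ) (hlam : 0 ≤ lam)
    (hint : Integrable (fun ξ => Real.log (Λ.rnDeriv μ ξ).toReal) Λ) :
    ∫ ξ, G ξ ∂Λ - κ * (∫ ξ, Real.log (Λ.rnDeriv μ ξ).toReal ∂Λ) + κ * (Λ univ).toReal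
      ≤ κ * ∫ ξ, Real.exp ((G ξ - lam) / κ) ∂μ + lam * (Λ univ).toReal := by
  set p : α → ℝ := fun ξ => (Λ.rnDeriv μ ξ).toReal with hp
  have hpm : Measurable p := (Measure.measurable_rnDeriv Λ μ).ennreal_toReal
  have hp0 : ∀ ξ, 0 ≤ p ξ := fun ξ => ENNReal.toReal_nonneg
  have hpint : Integrable p μ := Measure.integrable_toReal_rnDeriv
  have hG : ∫ ξ, G ξ ∂Λ = ∫ ξ, p ξ * G ξ ∂μ := by
    rw [← integral_rnDeriv_smul hΛμ (f := G)]; simp [hp, smul_eq_mul]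
  have hlog : ∫ ξ, Real.log (p ξ) ∂Λ = ∫ ξ, p ξ * Real.log (p ξ) ∂μ := by
    rw [← integral_rnDeriv_smul hΛμ (f := fun ξ => Real.log (p ξ))]
    simp [hp, smul_eq_mul]
  have hmass : (Λ univ).toReal = ∫ ξ, p ξ ∂μ := (Measure.integral_toReal_rnDeriv hΛμ).symm
  have hGp : Integrable (fun ξ => p ξ * G ξ) μ := by
    refine Integrable.mono' (hpint.const_mul (|K|+1)) ((hpm.mul hGm).aestronglyMeasurable) ?_
    filter_upwards [hGb] with ξ hξ
    rw [Real.norm_eq_abs, abs_mul, abs_of_nonneg (hp0 ξ)]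
    have h1 : |G ξ| ≤ |K| + 1 := hξ.trans ((le_abs_self K).trans (by linarith))
    calc p ξ * |G ξ| ≤ p ξ * (|K|+1) := mul_le_mul_of_nonneg_left h1 (hp0 ξ)
      _ = (|K|+1) * p ξ := by ring
  have hplogp : Integrable (fun ξ => p ξ * Real.log (p ξ)) μ := by
    have := (integrable_rnDeriv_smul_iff hΛμ (f := fun ξ => Real.log (p ξ))).mpr hint
    simpa [hp, smul_eq_mul] using this
  have hexpint : Integrable (fun ξ => Real.exp ((G ξ - lam) / κ)) μ := by
    refine Integrable.mono' (integrable_const (Real.exp ((|K| + lam) / κ)))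
      ((((hGm.sub measurable_const).div_const κ).exp).aestronglyMeasurable) ?_
    filter_upwards [hGb] with ξ hξ
    rw [Real.norm_eq_abs, abs_of_nonneg (Real.exp_pos _).le, Real.exp_le_exp]
    have h1 : G ξ - lam ≤ |K| + lam := by
      have := (le_abs_self (G ξ)).trans (hξ.trans (le_abs_self K))
      linarith
    exact (div_le_div_iff_of_pos_right hκ).mpr h1
  have key : ∫ ξ, (p ξ * G ξ - κ * (p ξ * Real.log (p ξ)) + κ * p ξ) ∂μ
      ≤ ∫ ξ, (κ * Real.exp ((G ξ - lam) / κ) + lam * p ξ) ∂μ := by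
    refine integral_mono_ae ((hGp.sub (hplogp.const_mul κ)).add (hpint.const_mul κ))
      ((hexpint.const_mul κ).add (hpint.const_mul lam)) ?_
    filter_upwards with ξ
    exact pointwise_gibbs hκ (hp0 ξ) hlam
  have lhs_eq : ∫ ξ, (p ξ * G ξ - κ * (p ξ * Real.log (p ξ)) + κ * p ξ) ∂μ
      = ∫ ξ, p ξ * G ξ ∂μ - κ * (∫ ξ, p ξ * Real.log (p ξ) ∂μ) + κ * ∫ ξ, p ξ ∂μ := by
    have hsub : Integrable (fun ξ => p ξ * G ξ - κ * (p ξ * Real.log (p ξ))) μ :=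
      hGp.sub (hplogp.const_mul κ)
    rw [integral_add hsub (hpint.const_mul κ),
      integral_sub hGp (hplogp.const_mul κ), integral_const_mul, integral_const_mul]
  have rhs_eq : ∫ ξ, (κ * Real.exp ((G ξ - lam) / κ) + lam * p ξ) ∂μ
      = κ * ∫ ξ, Real.exp ((G ξ - lam) / κ) ∂μ + lam * ∫ ξ, p ξ ∂μ := by
    rw [integral_add (hexpint.const_mul κ) (hpint.const_mul lam), integral_const_mul,
      integral_const_mul]
  rw [lhs_eq, rhs_eq] at key
  rw [hG, hlog, hmass]
  exact key

lemma hasDerivAt_integral_exp {α : Type*} [MeasurableSpace α] (μ : Measure α) [IsFiniteMeasure μ]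
    {a b : α → ℝ} (ham : Measurable a) (hbm : Measurable b) {K : ℝ} (hK : 0 ≤ K)
    (hab : ∀ᵐ ξ ∂μ, |a ξ| ≤ K ∧ |b ξ| ≤ K) :
    HasDerivAt (fun t : ℝ => ∫ ξ, Real.exp (a ξ + t * b ξ) ∂μ)
      (∫ ξ, Real.exp (a ξ + 0 * b ξ) * b ξ ∂μ) 0 := by
  have hmeas : ∀ t : ℝ, AEStronglyMeasurable (fun ξ => Real.exp (a ξ + t * b ξ)) μ :=
    fun t => ((ham.add ((hbm.const_mul t))).exp).aestronglyMeasurable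
  have key := hasDerivAt_integral_of_dominated_loc_of_deriv_le (F := fun t ξ =>
      Real.exp (a ξ + t * b ξ)) (F' := fun t ξ => Real.exp (a ξ + t * b ξ) * b ξ)
      (x₀ := (0:ℝ)) (bound := fun _ => Real.exp (K + K) * K) (s := ball (0:ℝ) 1) (ball_mem_nhds 0 one_pos)
      (Filter.Eventually.of_forall hmeas) ?_ ?_ ?_ (integrable_const _) ?_
  · exact key.2
  · refine Integrable.mono' (integrable_const (Real.exp K)) (hmeas 0) ?_
    filter_upwards [hab] with ξ hξ
    rw [Real.norm_eq_abs, abs_of_nonneg (Real.exp_pos _).le, Real.exp_le_exp]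
    have := (le_abs_self (a ξ)).trans hξ.1
    linarith
  · exact (((ham.add ((hbm.const_mul 0))).exp).mul hbm).aestronglyMeasurable
  · filter_upwards [hab] with ξ hξ
    intro t ht
    rw [Real.norm_eq_abs, abs_mul, abs_of_nonneg (Real.exp_pos _).le]
    have h1 : a ξ + t * b ξ ≤ K + K := by
      have ha := (le_abs_self (a ξ)).trans hξ.1
      have hb : t * b ξ ≤ K := by
        have : |t * b ξ| ≤ 1 * K := by
          rw [abs_mul]
          exact mul_le_mul (le_of_lt (by simpa [abs_sub_comm] using mem_ball_iff_norm.mp ht))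
            hξ.2 (abs_nonneg _) zero_le_one
        calc t * b ξ ≤ |t * b ξ| := le_abs_self _
          _ ≤ 1 * K := this
          _ = K := one_mul K
      linarith
    exact mul_le_mul (Real.exp_le_exp.mpr h1) hξ.2 (abs_nonneg _) (Real.exp_pos _).le
  · filter_upwards with ξ
    intro t ht
    have h1 : HasDerivAt (fun t : ℝ => a ξ + t * b ξ) (b ξ) t := by
      simpa using ((hasDerivAt_id t).mul_const (b ξ)).const_add (a ξ)
    exact h1.exp

lemma tendsto_slope_integral_exp {α : Type*} [MeasurableSpace α] (μ : Measure α)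
    [IsFiniteMeasure μ] {a b : α → ℝ} (ham : Measurable a) (hbm : Measurable b) {K : ℝ}
    (hK : 0 ≤ K) (hab : ∀ᵐ ξ ∂μ, |a ξ| ≤ K ∧ |b ξ| ≤ K) :
    Filter.Tendsto (fun t : ℝ =>
        ((∫ ξ, Real.exp (a ξ + t * b ξ) ∂μ) - ∫ ξ, Real.exp (a ξ) ∂μ) / t)
      (nhdsWithin 0 (Set.Ioi 0)) (nhds (∫ ξ, Real.exp (a ξ) * b ξ ∂μ)) := by
  have h := hasDerivAt_integral_exp μ ham hbm hK hab
  rw [hasDerivAt_iff_tendsto_slope] at h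
  have heq : (∫ ξ, Real.exp (a ξ + 0 * b ξ) * b ξ ∂μ) = ∫ ξ, Real.exp (a ξ) * b ξ ∂μ := by
    simp
  rw [heq] at h
  have h2 := h.mono_left (nhdsWithin_mono 0 (fun t (ht : t ∈ Set.Ioi (0:ℝ)) =>
    (ne_of_gt ht : t ≠ 0)))
  refine (Filter.tendsto_congr' ?_).mp h2
  filter_upwards [self_mem_nhdsWithin] with t ht
  rw [slope_def_field]
  simp [div_eq_div_iff]

lemma tendsto_slope_log_integral_exp {α : Type*} [MeasurableSpace α] (μ : Measure α)
    [IsFiniteMeasure μ] {a b : α → ℝ} (ham : Measurable a) (hbm : Measurable b) {K : ℝ}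
    (hK : 0 ≤ K) (hab : ∀ᵐ ξ ∂μ, |a ξ| ≤ K ∧ |b ξ| ≤ K)
    (hpos : 0 < ∫ ξ, Real.exp (a ξ) ∂μ) :
    Filter.Tendsto (fun t : ℝ =>
        (Real.log (∫ ξ, Real.exp (a ξ + t * b ξ) ∂μ) - Real.log (∫ ξ, Real.exp (a ξ) ∂μ)) / t)
      (nhdsWithin 0 (Set.Ioi 0))
      (nhds ((∫ ξ, Real.exp (a ξ) * b ξ ∂μ) / ∫ ξ, Real.exp (a ξ) ∂μ)) := by
  have h := hasDerivAt_integral_exp μ ham hbm hK hab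
  have h00 : (∫ ξ, Real.exp (a ξ + 0 * b ξ) ∂μ) = ∫ ξ, Real.exp (a ξ) ∂μ := by simp
  have hne : (∫ ξ, Real.exp (a ξ + 0 * b ξ) ∂μ) ≠ 0 := by rw [h00]; exact ne_of_gt hpos
  have hl := h.log hne
  rw [hasDerivAt_iff_tendsto_slope] at hl
  have heq : (∫ ξ, Real.exp (a ξ + 0 * b ξ) * b ξ ∂μ) / (∫ ξ, Real.exp (a ξ + 0 * b ξ) ∂μ)
      = (∫ ξ, Real.exp (a ξ) * b ξ ∂μ) / ∫ ξ, Real.exp (a ξ) ∂μ := by simp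
  rw [heq] at hl
  have h2 := hl.mono_left (nhdsWithin_mono 0 (fun t (ht : t ∈ Set.Ioi (0:ℝ)) =>
    (ne_of_gt ht : t ≠ 0)))
  refine (Filter.tendsto_congr' ?_).mp h2
  filter_upwards [self_mem_nhdsWithin] with t ht
  rw [slope_def_field, h00]
  simp [div_eq_div_iff]

end Auxiliary

set_option maxHeartbeats 2000000

/-- Existence of a saddle point of the regularized Lagrangian
`L_κ(x,Λ) = f(x) + ∫_Ξ g(x,ξ) dΛ(ξ) − κ B(Λ,Λ_u)` on `X × V`,
where `V = {Λ ∈ M₊(Ξ) : Λ(Ξ) ≤ ρ̄}`, together with the minimax equalities. -/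
theorem stmt_15 {m d : ℕ}
    (X : Set (EuclideanSpace ℝ (Fin m))) (Ξ : Set (EuclideanSpace ℝ (Fin d)))
    (hXconv : Convex ℝ X) (hXcomp : IsCompact X) (hXne : X.Nonempty)
    (hΞcomp : IsCompact Ξ) (hvol : 0 < volume Ξ)
    (f : EuclideanSpace ℝ (Fin m) → ℝ)
    (g : EuclideanSpace ℝ (Fin m) → EuclideanSpace ℝ (Fin d) → ℝ)
    (hfconv : ConvexOn ℝ X f) (hfcont : ContinuousOn f X)
    (hgcont : ContinuousOn (fun p : EuclideanSpace ℝ (Fin m) × EuclideanSpace ℝ (Fin d) =>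
      g p.1 p.2) (X ×ˢ Ξ))
    (hgconv : ∀ ξ ∈ Ξ, ConvexOn ℝ X fun x => g x ξ)
    (κ : ℝ) (hκ : κ ∈ Set.Ioc (0 : ℝ) 1)
    (ρbar ρ0 : ℝ) (hρbar : 0 < ρbar) (hρ0 : ρ0 ∈ Set.Ioc (0 : ℝ) ρbar) :
    -- `Λ_u` : the measure with constant Lebesgue density `ρ₀ / vol(Ξ)` on `Ξ`
    let Λu : Measure (EuclideanSpace ℝ (Fin d)) :=
      ENNReal.ofReal (ρ0 / (volume Ξ).toReal) • volume.restrict Ξ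
    -- the dual feasible set `V`
    let V : Set (Measure (EuclideanSpace ℝ (Fin d))) :=
      {Λ | IsFiniteMeasure Λ ∧ Λ Ξᶜ = 0 ∧ Λ Ξ ≤ ENNReal.ofReal ρbar}
    -- the regularized Lagrangian, with values in `EReal`
    let Lκ : EuclideanSpace ℝ (Fin m) → Measure (EuclideanSpace ℝ (Fin d)) → EReal :=
      fun x Λ => ((f x + ∫ ξ in Ξ, g x ξ ∂Λ : ℝ) : EReal) - (κ : EReal) * Bprox Ξ Λ Λu
    ∃ xs ∈ X, ∃ Λs ∈ V,
      (∀ Λ ∈ V, Lκ xs Λ ≤ Lκ xs Λs) ∧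
      (∀ x ∈ X, Lκ xs Λs ≤ Lκ x Λs) ∧
      (⨅ x ∈ X, ⨆ Λ ∈ V, Lκ x Λ) = Lκ xs Λs ∧
      (⨆ Λ ∈ V, ⨅ x ∈ X, Lκ x Λ) = Lκ xs Λs := by
  intro Λu V Lκ
  obtain ⟨hκ0, hκ1⟩ := hκ
  obtain ⟨hρ00, hρ0b⟩ := hρ0
  have hΞm : MeasurableSet Ξ := hΞcomp.isClosed.measurableSet
  have hvolfin : volume Ξ < ⊤ := hΞcomp.measure_lt_top
  have hvr : 0 < (volume Ξ).toReal := ENNReal.toReal_pos (ne_of_gt hvol) hvolfin.ne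
  -- Λu basic facts
  haveI hΛufin : IsFiniteMeasure Λu := by
    constructor
    show ENNReal.ofReal (ρ0 / (volume Ξ).toReal) * (volume.restrict Ξ) univ < ⊤
    rw [Measure.restrict_apply_univ]
    exact ENNReal.mul_lt_top ENNReal.ofReal_lt_top hvolfin
  have hΛuc : Λu Ξᶜ = 0 := by
    show ENNReal.ofReal (ρ0 / (volume Ξ).toReal) * (volume.restrict Ξ) Ξᶜ = 0
    rw [Measure.restrict_apply hΞm.compl, compl_inter_self, measure_empty, mul_zero]
  have haemem : ∀ᵐ ξ ∂Λu, ξ ∈ Ξ := by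
    rw [Filter.eventually_iff, mem_ae_iff]
    simpa using hΛuc
  have hΛuruniv : Λu univ = ENNReal.ofReal ρ0 := by
    show ENNReal.ofReal (ρ0 / (volume Ξ).toReal) * (volume.restrict Ξ) univ = _
    rw [Measure.restrict_apply_univ]
    have hA : volume Ξ = ENNReal.ofReal (volume Ξ).toReal :=
      (ENNReal.ofReal_toReal hvolfin.ne).symm
    calc ENNReal.ofReal (ρ0 / (volume Ξ).toReal) * volume Ξ
        = ENNReal.ofReal (ρ0 / (volume Ξ).toReal) * ENNReal.ofReal (volume Ξ).toReal := by
          rw [← hA]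
      _ = ENNReal.ofReal (ρ0 / (volume Ξ).toReal * (volume Ξ).toReal) :=
          (ENNReal.ofReal_mul (div_nonneg hρ00.le ENNReal.toReal_nonneg)).symm
      _ = ENNReal.ofReal ρ0 := by rw [div_mul_cancel₀ _ (ne_of_gt hvr)]
  have hΛuuniv : (Λu univ).toReal = ρ0 := by
    rw [hΛuruniv, ENNReal.toReal_ofReal hρ00.le]
  have hΛurestr : Λu.restrict Ξ = Λu := Measure.restrict_eq_self_of_ae_mem haemem
  -- bound on g
  obtain ⟨K0, hK0⟩ := (hXcomp.prod hΞcomp).exists_bound_of_continuousOn hgcont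
  set K : ℝ := max K0 0 with hKdef
  have hK : 0 ≤ K := le_max_right _ _
  have hgK : ∀ x ∈ X, ∀ ξ ∈ Ξ, |g x ξ| ≤ K := by
    intro x hx ξ hξ
    exact le_trans (by simpa using hK0 (x, ξ) ⟨hx, hξ⟩) (le_max_left _ _)
  -- continuity in ξ
  have hgx : ∀ x ∈ X, ContinuousOn (fun ξ => g x ξ) Ξ := by
    intro x hx
    exact hgcont.comp ((continuous_const.prodMk continuous_id).continuousOn)
      (fun ξ hξ => ⟨hx, hξ⟩)
  have hgxasm : ∀ x ∈ X, AEStronglyMeasurable (fun ξ => g x ξ) Λu := by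
    intro x hx
    exact ((hgx x hx).aestronglyMeasurable hΞm).smul_measure _
  have hgxaem : ∀ x ∈ X, AEMeasurable (fun ξ => g x ξ) Λu := by
    intro x hx
    exact (hgxasm x hx).aemeasurable
  have hgxb : ∀ x ∈ X, ∀ᵐ ξ ∂Λu, |g x ξ| ≤ K := by
    intro x hx
    filter_upwards [haemem] with ξ hξ using hgK x hx ξ hξ
  -- M function
  set Mx : EuclideanSpace ℝ (Fin m) → ℝ := fun x => ∫ ξ, Real.exp (g x ξ / κ) ∂Λu with hMxdef
  have hexpb : ∀ x ∈ X, ∀ᵐ ξ ∂Λu, ‖Real.exp (g x ξ / κ)‖ ≤ Real.exp (K / κ) := by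
    intro x hx
    filter_upwards [hgxb x hx] with ξ hξ
    rw [Real.norm_eq_abs, abs_of_nonneg (Real.exp_pos _).le, Real.exp_le_exp]
    exact (div_le_div_iff_of_pos_right hκ0).mpr (le_trans (le_abs_self _) hξ)
  have hexpint : ∀ x ∈ X, Integrable (fun ξ => Real.exp (g x ξ / κ)) Λu := by
    intro x hx
    exact Integrable.mono' (integrable_const _)
      (Real.continuous_exp.comp_aestronglyMeasurable ((hgxaem x hx).div_const κ).aestronglyMeasurable)
      (hexpb x hx)
  have hMpos : ∀ x ∈ X, 0 < Mx x := by
    intro x hx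
    have h1 : Real.exp (-(K / κ)) * ρ0 ≤ Mx x := by
      have := integral_mono_ae (integrable_const (Real.exp (-(K/κ)))) (hexpint x hx) ?_
      · rw [integral_const, measureReal_def, hΛuuniv, smul_eq_mul, mul_comm] at this
        exact this
      · filter_upwards [hgxb x hx] with ξ hξ
        rw [Real.exp_le_exp]
        have := neg_abs_le (g x ξ)
        have h2 : -(K) ≤ g x ξ := le_trans (neg_le_neg hξ) this
        calc -(K / κ) = -K / κ := by ring
          _ ≤ g x ξ / κ := (div_le_div_iff_of_pos_right hκ0).mpr h2
    have : 0 < Real.exp (-(K/κ)) * ρ0 := by positivity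
    linarith
  -- continuity of M on X
  have hMcont : ContinuousOn Mx X := by
    refine continuousOn_of_dominated (fun x hx => Real.continuous_exp.comp_aestronglyMeasurable
      ((hgxaem x hx).div_const κ).aestronglyMeasurable)
      (fun x hx => hexpb x hx) (integrable_const _) ?_
    filter_upwards [haemem] with ξ hξ
    have : ContinuousOn (fun x => g x ξ) X :=
      hgcont.comp ((continuous_id.prodMk continuous_const).continuousOn)
        (fun x hx => ⟨hx, hξ⟩)
    exact Real.continuous_exp.comp_continuousOn (this.div_const κ)
  -- the function S
  set S : ℝ → ℝ := fun M => κ * (min M ρbar - ρ0) + κ * ρbar * Real.log (max M ρbar / ρbar)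
    with hSdef
  have hScont : Continuous S := by
    have h1 : Continuous fun M : ℝ => max M ρbar / ρbar :=
      (continuous_id.max continuous_const).div_const ρbar
    have h2 : ∀ M : ℝ, max M ρbar / ρbar ≠ 0 := by
      intro M
      have : 0 < max M ρbar / ρbar := div_pos (lt_max_of_lt_right hρbar) hρbar
      exact ne_of_gt this
    exact ((continuous_const.mul ((continuous_id.min continuous_const).sub
      continuous_const)).add (continuous_const.mul (h1.log h2)))
  have hS_le : ∀ M : ℝ, S M ≤ κ * (M - ρ0) := by
    intro M
    rcases le_or_gt M ρbar with h | h
    · simp [hSdef, min_eq_left h, max_eq_right h, div_self (ne_of_gt hρbar)]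
    · have hlog : Real.log (M / ρbar) ≤ M / ρbar - 1 :=
        Real.log_le_sub_one_of_pos (div_pos (hρbar.trans h) hρbar)
      have : κ * ρbar * Real.log (M / ρbar) ≤ κ * ρbar * (M / ρbar - 1) :=
        mul_le_mul_of_nonneg_left hlog (by positivity)
      have heq : κ * ρbar * (M / ρbar - 1) = κ * (M - ρbar) := by
        field_simp
      rw [hSdef]
      simp only [min_eq_right h.le, max_eq_left h.le]
      nlinarith
  have hS_ge : ∀ M : ℝ, 0 < M →
      κ * (ρbar - ρ0) + κ * ρbar * Real.log (M / ρbar) ≤ S M := by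
    intro M hM
    rcases le_or_gt M ρbar with h | h
    · have hlog : Real.log (M / ρbar) ≤ M / ρbar - 1 :=
        Real.log_le_sub_one_of_pos (div_pos hM hρbar)
      have : κ * ρbar * Real.log (M / ρbar) ≤ κ * ρbar * (M / ρbar - 1) :=
        mul_le_mul_of_nonneg_left hlog (by positivity)
      have heq : κ * ρbar * (M / ρbar - 1) = κ * (M - ρbar) := by
        field_simp
      rw [hSdef]
      simp only [min_eq_left h, max_eq_right h, div_self (ne_of_gt hρbar), Real.log_one, mul_zero]
      nlinarith
    · rw [hSdef]
      simp only [min_eq_right h.le, max_eq_left h.le]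
      exact le_rfl
  have hS_eq_lin : ∀ M : ℝ, M ≤ ρbar → S M = κ * (M - ρ0) := by
    intro M h
    simp [hSdef, min_eq_left h, max_eq_right h, div_self (ne_of_gt hρbar)]
  have hS_eq_log : ∀ M : ℝ, ρbar ≤ M →
      S M = κ * (ρbar - ρ0) + κ * ρbar * Real.log (M / ρbar) := by
    intro M h
    simp [hSdef, min_eq_right h, max_eq_left h]
  have hS_mono : Monotone S := by
    intro M1 M2 h
    have h1 : min M1 ρbar ≤ min M2 ρbar := min_le_min h le_rfl
    have h2 : Real.log (max M1 ρbar / ρbar) ≤ Real.log (max M2 ρbar / ρbar) :=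
      Real.log_le_log (div_pos (lt_max_of_lt_right hρbar) hρbar)
        ((div_le_div_iff_of_pos_right hρbar).mpr (max_le_max h le_rfl))
    have e1 : κ * (min M1 ρbar - ρ0) ≤ κ * (min M2 ρbar - ρ0) :=
      mul_le_mul_of_nonneg_left (by linarith) hκ0.le
    have e2 : κ * ρbar * Real.log (max M1 ρbar / ρbar)
        ≤ κ * ρbar * Real.log (max M2 ρbar / ρbar) :=
      mul_le_mul_of_nonneg_left h2 (by positivity)
    exact add_le_add e1 e2
  -- minimizer of φ
  have hφcont : ContinuousOn (fun x => f x + S (Mx x)) X :=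
    hfcont.add (hScont.comp_continuousOn hMcont)
  obtain ⟨xs, hxsX, hxsmin⟩ := hXcomp.exists_isMinOn hXne hφcont
  -- measurable version of g xs
  obtain ⟨a0, ha0m, ha0eq⟩ := hgxaem xs hxsX
  have ha0eq' : ∀ᵐ ξ ∂Λu, g xs ξ = a0 ξ := ha0eq
  have ha0b : ∀ᵐ ξ ∂Λu, |a0 ξ| ≤ K := by
    filter_upwards [hgxb xs hxsX, ha0eq'] with ξ h1 h2
    rw [← h2]; exact h1
  set M : ℝ := Mx xs with hMdef
  have hM0 : 0 < M := hMpos xs hxsX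
  have hMa0 : ∫ ξ, Real.exp (a0 ξ / κ) ∂Λu = M := by
    rw [hMdef, hMxdef]
    exact integral_congr_ae (by filter_upwards [ha0eq'] with ξ h; rw [h])
  -- scaling constant
  set c : ℝ := if M ≤ ρbar then 1 else ρbar / M with hcdef
  have hc0 : 0 < c := by
    rw [hcdef]; split
    · exact one_pos
    · exact div_pos hρbar hM0
  have hc1 : c ≤ 1 := by
    rw [hcdef]; split
    · exact le_refl 1
    · rename_i h
      push_neg at h
      exact (div_le_one hM0).mpr h.le
  have hcM : c * M = min M ρbar := by
    rw [hcdef]; split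
    · rename_i h; rw [one_mul, min_eq_left h]
    · rename_i h
      push_neg at h
      rw [min_eq_right h.le, div_mul_cancel₀ _ (ne_of_gt hM0)]
  have hcMle : c * M ≤ ρbar := by rw [hcM]; exact min_le_right _ _
  set lam : ℝ := -(κ * Real.log c) with hlamdef
  have hlam0 : 0 ≤ lam := by
    rw [hlamdef, neg_nonneg]
    exact mul_nonpos_of_nonneg_of_nonpos hκ0.le (Real.log_nonpos hc0.le hc1)
  have hexplam : Real.exp (-(lam / κ)) = c := by
    have h1 : -(lam / κ) = Real.log c := by
      rw [hlamdef]; field_simp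
    rw [h1]; exact Real.exp_log hc0
  -- the measure Λs
  set ρden : EuclideanSpace ℝ (Fin d) → ℝ≥0∞ :=
    fun ξ => ENNReal.ofReal (c * Real.exp (a0 ξ / κ)) with hρdendef
  have hρdenm : Measurable ρden := ((ha0m.div_const κ).exp.const_mul c).ennreal_ofReal
  set Λs : Measure (EuclideanSpace ℝ (Fin d)) := Λu.withDensity ρden with hΛsdef
  have hΛsac : Λs ≪ Λu := withDensity_absolutelyContinuous _ _
  have hrn : Λs.rnDeriv Λu =ᵐ[Λu] ρden := Measure.rnDeriv_withDensity Λu hρdenm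
  have hcexpint : Integrable (fun ξ => c * Real.exp (a0 ξ / κ)) Λu :=
    (((hexpint xs hxsX).congr (by filter_upwards [ha0eq'] with ξ h; rw [h])).const_mul c)
  have hΛsuniv : Λs univ = ENNReal.ofReal (c * M) := by
    rw [hΛsdef, withDensity_apply _ MeasurableSet.univ, Measure.restrict_univ]
    rw [hρdendef]
    rw [← ofReal_integral_eq_lintegral_ofReal hcexpint
      (by filter_upwards with ξ using by positivity)]
    rw [integral_const_mul, hMa0]
  haveI hΛsfin : IsFiniteMeasure Λs := by
    constructor
    rw [hΛsuniv]
    exact ENNReal.ofReal_lt_top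
  have hΛsc : Λs Ξᶜ = 0 := by
    rw [hΛsdef, withDensity_apply _ hΞm.compl]
    rw [Measure.restrict_eq_zero.mpr hΛuc]
    simp
  have hΛsmem : Λs ∈ V := by
    refine ⟨hΛsfin, hΛsc, ?_⟩
    calc Λs Ξ ≤ Λs univ := measure_mono (subset_univ _)
      _ = ENNReal.ofReal (c * M) := hΛsuniv
      _ ≤ ENNReal.ofReal ρbar := ENNReal.ofReal_le_ofReal hcMle
  have haemems : ∀ᵐ ξ ∂Λs, ξ ∈ Ξ := by
    rw [Filter.eventually_iff, mem_ae_iff]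
    simpa using hΛsc
  have hΛsrestr : Λs.restrict Ξ = Λs := Measure.restrict_eq_self_of_ae_mem haemems
  have hmass_univ_Ξ : ∀ (Λ : Measure (EuclideanSpace ℝ (Fin d))), Λ Ξᶜ = 0 → Λ Ξ = Λ univ := by
    intro Λ hc'
    rw [← measure_add_measure_compl hΞm, hc', add_zero]
  have hΛs_univ_toReal : (Λs univ).toReal = c * M := by
    rw [hΛsuniv, ENNReal.toReal_ofReal (by positivity)]
  haveI : SigmaFinite Λs := inferInstance
  haveI hsfu : SigmaFinite Λu := inferInstance
  haveI : Λs.HaveLebesgueDecomposition Λu := inferInstance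
  -- integrals against Λs
  have hint_s : ∀ h : EuclideanSpace ℝ (Fin d) → ℝ,
      ∫ ξ, h ξ ∂Λs = ∫ ξ, (c * Real.exp (a0 ξ / κ)) * h ξ ∂Λu := by
    intro h
    rw [← integral_rnDeriv_smul hΛsac (f := h)]
    refine integral_congr_ae ?_
    filter_upwards [hrn] with ξ hξ
    rw [hξ, smul_eq_mul, hρdendef, ENNReal.toReal_ofReal (by positivity)]
  -- a.e. facts transferred to Λs
  have haes : ∀ {P : EuclideanSpace ℝ (Fin d) → Prop},
      (∀ᵐ ξ ∂Λu, P ξ) → (∀ᵐ ξ ∂Λs, P ξ) := fun h => hΛsac.ae_le h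
  have ha0bs : ∀ᵐ ξ ∂Λs, |a0 ξ| ≤ K := haes ha0b
  have ha0ints : Integrable a0 Λs := by
    refine Integrable.mono' (integrable_const K) (ha0m.aestronglyMeasurable) ?_
    filter_upwards [ha0bs] with ξ hξ using hξ
  have hrn_s : ∀ᵐ ξ ∂Λs, (Λs.rnDeriv Λu ξ).toReal = c * Real.exp (a0 ξ / κ) := by
    filter_upwards [haes hrn] with ξ hξ
    rw [hξ, hρdendef, ENNReal.toReal_ofReal (by positivity)]
  have hlogrn_s : ∀ᵐ ξ ∂Λs, Real.log ((Λs.rnDeriv Λu ξ).toReal)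
      = Real.log c + a0 ξ / κ := by
    filter_upwards [hrn_s] with ξ hξ
    rw [hξ, Real.log_mul (ne_of_gt hc0) (Real.exp_ne_zero _), Real.log_exp]
  have hlogint_s : Integrable (fun ξ => Real.log ((Λs.rnDeriv Λu ξ).toReal)) Λs := by
    refine Integrable.congr ((integrable_const (Real.log c)).add (ha0ints.div_const κ)) ?_
    filter_upwards [hlogrn_s] with ξ hξ using hξ.symm
  have hlogintOn_s : IntegrableOn
      (fun ξ => Real.log ((Λs.rnDeriv Λu ξ).toReal)) Ξ Λs := by
    rw [IntegrableOn, hΛsrestr]; exact hlogint_s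
  set A : ℝ := ∫ ξ, a0 ξ ∂Λs with hAdef
  set bs : ℝ := ∫ ξ, Real.log ((Λs.rnDeriv Λu ξ).toReal) ∂Λs with hbsdef
  have hbs_val : bs = Real.log c * (c * M) + A / κ := by
    rw [hbsdef]
    rw [integral_congr_ae hlogrn_s]
    rw [integral_add (integrable_const _) (ha0ints.div_const κ), integral_const,
      integral_div, measureReal_def, hΛs_univ_toReal]
    rw [smul_eq_mul, hAdef]
    ring
  have hΛsΞ : (Λs Ξ).toReal = c * M := by
    rw [hmass_univ_Ξ Λs hΛsc, hΛs_univ_toReal]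
  have hΛuΞ : (Λu Ξ).toReal = ρ0 := by
    rw [hmass_univ_Ξ Λu hΛuc, hΛuuniv]
  have hBs : Bprox Ξ Λs Λu = ((bs - (c * M - ρ0) : ℝ) : EReal) := by
    rw [Bprox, if_pos ⟨hΛsac, hlogintOn_s⟩]
    congr 1
    rw [hΛsrestr, ← hbsdef, hΛsΞ, hΛuΞ]
  have hAgs : ∫ ξ in Ξ, g xs ξ ∂Λs = A := by
    rw [hΛsrestr, hAdef]
    exact integral_congr_ae (haes ha0eq')
  have hlamzero : M ≤ ρbar → lam = 0 := by
    intro h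
    rw [hlamdef, hcdef, if_pos h, Real.log_one, mul_zero, neg_zero]
  have hlamval : ρbar < M → lam = κ * Real.log (M / ρbar) := by
    intro h
    rw [hlamdef, hcdef, if_neg (not_le.mpr h), Real.log_div (ne_of_gt hρbar) (ne_of_gt hM0),
      Real.log_div (ne_of_gt hM0) (ne_of_gt hρbar)]
    ring
  have hSMkey : S M = κ * (c * M) - κ * ρ0 + lam * (c * M) := by
    rcases le_or_gt M ρbar with h | h
    · have hc : c = 1 := by rw [hcdef, if_pos h]
      rw [hS_eq_lin M h, hlamzero h, hc]
      ring
    · have hcM' : c * M = ρbar := by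
        rw [hcM, min_eq_right h.le]
      rw [hS_eq_log M h.le, hlamval h, hcM']
      ring
  have hlamcM : lam * (c * M) = lam * ρbar := by
    rcases le_or_gt M ρbar with h | h
    · rw [hlamzero h]; ring
    · rw [hcM, min_eq_right h.le]
  -- the real value of the Lagrangian at (xs, Λs)
  have hRHSval : ∫ ξ in Ξ, g xs ξ ∂Λs - κ * (bs - (c * M - ρ0)) = S M := by
    rw [hAgs, hbs_val, hSMkey, hlamdef]
    field_simp
    ring
  have hLκs_eq : Lκ xs Λs
      = ((f xs + (∫ ξ in Ξ, g xs ξ ∂Λs - κ * (bs - (c * M - ρ0))) : ℝ) : EReal) := by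
    show ((f xs + ∫ ξ in Ξ, g xs ξ ∂Λs : ℝ) : EReal) - (κ : EReal) * Bprox Ξ Λs Λu = _
    rw [hBs, ← EReal.coe_mul, ← EReal.coe_sub]
    norm_cast
    ring
  have parta : ∀ Λ ∈ V, Lκ xs Λ ≤ Lκ xs Λs := by
    intro Λ hΛ
    obtain ⟨hΛfin, hΛc, hΛΞle⟩ := hΛ
    haveI := hΛfin
    by_cases hcond : Λ ≪ Λu ∧
        IntegrableOn (fun ξ => Real.log ((Λ.rnDeriv Λu ξ).toReal)) Ξ Λ
    · obtain ⟨hΛac, hintOn⟩ := hcond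
      have haemΛ : ∀ᵐ ξ ∂Λ, ξ ∈ Ξ := by
        rw [Filter.eventually_iff, mem_ae_iff]; simpa using hΛc
      have hΛrestr : Λ.restrict Ξ = Λ := Measure.restrict_eq_self_of_ae_mem haemΛ
      have hint : Integrable (fun ξ => Real.log ((Λ.rnDeriv Λu ξ).toReal)) Λ := by
        rw [IntegrableOn, hΛrestr] at hintOn; exact hintOn
      have hGB := gibbs_bound Λu Λ hΛac ha0m ha0b hκ0 hlam0 hint
      have hexp_eq : ∫ ξ, Real.exp ((a0 ξ - lam) / κ) ∂Λu = c * M := by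
        have hpt : ∀ ξ, Real.exp ((a0 ξ - lam) / κ) = Real.exp (a0 ξ / κ) * c := by
          intro ξ
          rw [← hexplam, ← Real.exp_add]
          congr 1
          ring
        calc ∫ ξ, Real.exp ((a0 ξ - lam) / κ) ∂Λu
            = ∫ ξ, Real.exp (a0 ξ / κ) * c ∂Λu :=
              integral_congr_ae (Filter.Eventually.of_forall hpt)
          _ = (∫ ξ, Real.exp (a0 ξ / κ) ∂Λu) * c := by rw [integral_mul_const]
          _ = c * M := by rw [hMa0]; ring
      rw [hexp_eq] at hGB
      have hmassle : (Λ univ).toReal ≤ ρbar := by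
        rw [← hmass_univ_Ξ Λ hΛc]
        exact ENNReal.toReal_le_of_le_ofReal hρbar.le hΛΞle
      have hlamTR : lam * (Λ univ).toReal ≤ lam * ρbar :=
        mul_le_mul_of_nonneg_left hmassle hlam0
      have hAg : ∫ ξ, g xs ξ ∂Λ = ∫ ξ, a0 ξ ∂Λ :=
        integral_congr_ae (hΛac.ae_le ha0eq')
      have hSM' : S M = κ * (c * M) - κ * ρ0 + lam * ρbar := by
        rw [hSMkey, hlamcM]
      have hreal : ∫ ξ in Ξ, g xs ξ ∂Λ -
          κ * ((∫ ξ in Ξ, Real.log ((Λ.rnDeriv Λu ξ).toReal) ∂Λ)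
            - ((Λ Ξ).toReal - (Λu Ξ).toReal))
          ≤ ∫ ξ in Ξ, g xs ξ ∂Λs - κ * (bs - (c * M - ρ0)) := by
        rw [hRHSval, hΛrestr, hΛuΞ, hAg, hmass_univ_Ξ Λ hΛc, hSM']
        linarith [hGB, hlamTR]
      have h1 : Lκ xs Λ = ((f xs + (∫ ξ in Ξ, g xs ξ ∂Λ -
          κ * ((∫ ξ in Ξ, Real.log ((Λ.rnDeriv Λu ξ).toReal) ∂Λ)
            - ((Λ Ξ).toReal - (Λu Ξ).toReal))) : ℝ) : EReal) := by
        show ((f xs + ∫ ξ in Ξ, g xs ξ ∂Λ : ℝ) : EReal) - (κ : EReal) * Bprox Ξ Λ Λu = _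
        rw [Bprox, if_pos ⟨hΛac, hintOn⟩, ← EReal.coe_mul, ← EReal.coe_sub]
        norm_cast
        ring
      rw [h1, hLκs_eq]
      exact EReal.coe_le_coe_iff.mpr (by linarith [hreal])
    · have hB : Bprox Ξ Λ Λu = ⊤ := by rw [Bprox, if_neg hcond]
      have hbot : Lκ xs Λ = ⊥ := by
        show ((f xs + ∫ ξ in Ξ, g xs ξ ∂Λ : ℝ) : EReal) - (κ : EReal) * Bprox Ξ Λ Λu = ⊥
        rw [hB, EReal.coe_mul_top_of_pos hκ0, EReal.sub_top]
      rw [hbot]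
      exact bot_le
  -- part (b)
  have partb : ∀ x ∈ X, Lκ xs Λs ≤ Lκ x Λs := by
    intro x hx
    obtain ⟨b0, hb0m, hb0eq⟩ := hgxaem x hx
    have hb0eq' : ∀ᵐ ξ ∂Λu, g x ξ = b0 ξ := hb0eq
    have hb0b : ∀ᵐ ξ ∂Λu, |b0 ξ| ≤ K := by
      filter_upwards [hgxb x hx, hb0eq'] with ξ h1 h2
      rw [← h2]; exact h1
    have hb0ints : Integrable b0 Λs := by
      refine Integrable.mono' (integrable_const K) hb0m.aestronglyMeasurable ?_
      filter_upwards [haes hb0b] with ξ hξ using hξ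
    set Bx : ℝ := ∫ ξ, b0 ξ ∂Λs with hBxdef
    have hBgx : ∫ ξ in Ξ, g x ξ ∂Λs = Bx := by
      rw [hΛsrestr, hBxdef]
      exact integral_congr_ae (haes hb0eq')
    set aa : EuclideanSpace ℝ (Fin d) → ℝ := fun ξ => a0 ξ / κ with haadef
    set bb : EuclideanSpace ℝ (Fin d) → ℝ := fun ξ => (b0 ξ - a0 ξ) / κ with hbbdef
    have haam : Measurable aa := ha0m.div_const κ
    have hbbm : Measurable bb := (hb0m.sub ha0m).div_const κ
    set KK : ℝ := 3 * K / κ + 1 with hKKdef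
    have hKK : 0 ≤ KK := by positivity
    have habb : ∀ᵐ ξ ∂Λu, |aa ξ| ≤ KK ∧ |bb ξ| ≤ KK := by
      filter_upwards [ha0b, hb0b] with ξ h1 h2
      have hsub : |b0 ξ - a0 ξ| ≤ 2 * K := by
        calc |b0 ξ - a0 ξ| ≤ |b0 ξ| + |a0 ξ| := abs_sub _ _
          _ ≤ 2 * K := by linarith
      constructor
      · rw [haadef, abs_div, abs_of_pos hκ0]
        have h3 : |a0 ξ| / κ ≤ K / κ := (div_le_div_iff_of_pos_right hκ0).mpr h1
        have h4 : K / κ ≤ 3 * K / κ := (div_le_div_iff_of_pos_right hκ0).mpr (by linarith)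
        rw [hKKdef]; linarith
      · rw [hbbdef, abs_div, abs_of_pos hκ0]
        have h3 : |b0 ξ - a0 ξ| / κ ≤ 2 * K / κ := (div_le_div_iff_of_pos_right hκ0).mpr hsub
        have h4 : 2 * K / κ ≤ 3 * K / κ := (div_le_div_iff_of_pos_right hκ0).mpr (by linarith)
        rw [hKKdef]; linarith
    set N : ℝ → ℝ := fun t => ∫ ξ, Real.exp (aa ξ + t * bb ξ) ∂Λu with hNdef
    have hexpaaM : ∫ ξ, Real.exp (aa ξ) ∂Λu = M := by
      simp only [haadef]; exact hMa0
    have hN0 : N 0 = M := by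
      rw [hNdef]
      simp only [zero_mul, add_zero]
      exact hexpaaM
    set I : ℝ := ∫ ξ, Real.exp (aa ξ) * bb ξ ∂Λu with hIdef
    have hBxA : Bx - A = c * (κ * I) := by
      have h1 : Bx - A = ∫ ξ, (b0 ξ - a0 ξ) ∂Λs := by
        rw [hBxdef, hAdef, ← integral_sub hb0ints ha0ints]
      have h2 : ∫ ξ, (b0 ξ - a0 ξ) ∂Λs
          = ∫ ξ, (c * Real.exp (a0 ξ / κ)) * (b0 ξ - a0 ξ) ∂Λu := hint_s _
      have h3 : ∀ ξ, (c * Real.exp (a0 ξ / κ)) * (b0 ξ - a0 ξ)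
          = (c * κ) * (Real.exp (aa ξ) * bb ξ) := by
        intro ξ
        simp only [haadef, hbbdef]
        field_simp
      rw [h1, h2, integral_congr_ae (Filter.Eventually.of_forall h3), integral_const_mul,
        ← hIdef]
      ring
    -- minimality chain
    have hxt : ∀ t ∈ Icc (0:ℝ) 1, ((1 - t) • xs + t • x) ∈ X := fun t ht =>
      hXconv hxsX hx (by linarith [ht.2]) ht.1 (by ring)
    have hMxt_le : ∀ t ∈ Icc (0:ℝ) 1, Mx ((1 - t) • xs + t • x) ≤ N t := by
      intro t ht
      have hint2 : Integrable (fun ξ => Real.exp (aa ξ + t * bb ξ)) Λu := by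
        refine Integrable.mono' (integrable_const (Real.exp (3 * K / κ)))
          ((haam.add (hbbm.const_mul t)).exp).aestronglyMeasurable ?_
        filter_upwards [ha0b, hb0b] with ξ h1 h2
        rw [Real.norm_eq_abs, abs_of_nonneg (Real.exp_pos _).le, Real.exp_le_exp]
        simp only [haadef, hbbdef]
        have hsub : b0 ξ - a0 ξ ≤ 2 * K := by
          have := le_abs_self (b0 ξ - a0 ξ)
          have h5 : |b0 ξ - a0 ξ| ≤ 2 * K := by
            calc |b0 ξ - a0 ξ| ≤ |b0 ξ| + |a0 ξ| := abs_sub _ _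
              _ ≤ 2 * K := by linarith
          linarith
        have ha' : a0 ξ ≤ K := le_trans (le_abs_self _) h1
        have htb : t * (b0 ξ - a0 ξ) ≤ 2 * K := by
          rcases le_or_gt (b0 ξ - a0 ξ) 0 with hneg | hpos
          · have : t * (b0 ξ - a0 ξ) ≤ 0 := mul_nonpos_of_nonneg_of_nonpos ht.1 hneg
            nlinarith [hK]
          · calc t * (b0 ξ - a0 ξ) ≤ 1 * (b0 ξ - a0 ξ) :=
                mul_le_mul_of_nonneg_right ht.2 hpos.le
              _ ≤ 2 * K := by linarith
        have hsum : a0 ξ + t * (b0 ξ - a0 ξ) ≤ 3 * K := by linarith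
        calc a0 ξ / κ + t * ((b0 ξ - a0 ξ) / κ) = (a0 ξ + t * (b0 ξ - a0 ξ)) / κ := by ring
          _ ≤ 3 * K / κ := (div_le_div_iff_of_pos_right hκ0).mpr hsum
      refine integral_mono_ae (hexpint _ (hxt t ht)) hint2 ?_
      filter_upwards [haemem, ha0eq', hb0eq'] with ξ hξΞ he1 he2
      rw [Real.exp_le_exp]
      have hconv := (hgconv ξ hξΞ).2 hxsX hx (by linarith [ht.2] : (0:ℝ) ≤ 1 - t) ht.1
        (by ring : (1 - t) + t = 1)
      simp only [smul_eq_mul] at hconv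
      simp only [haadef, hbbdef]
      rw [← he1, ← he2]
      have heq2 : g xs ξ / κ + t * ((g x ξ - g xs ξ) / κ)
          = ((1 - t) * g xs ξ + t * g x ξ) / κ := by ring
      rw [heq2]
      exact (div_le_div_iff_of_pos_right hκ0).mpr hconv
    have hchain : ∀ t ∈ Ioc (0:ℝ) 1,
        f xs + S M ≤ (1 - t) * f xs + t * f x + S (N t) := by
      intro t ht
      have htmem : t ∈ Icc (0:ℝ) 1 := ⟨ht.1.le, ht.2⟩
      have hmin := isMinOn_iff.mp hxsmin _ (hxt t htmem)
      have hf := hfconv.2 hxsX hx (by linarith [ht.2] : (0:ℝ) ≤ 1 - t) ht.1.le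
        (by ring : (1 - t) + t = 1)
      simp only [smul_eq_mul] at hf
      have hSmon := hS_mono (hMxt_le t htmem)
      calc f xs + S M ≤ f ((1 - t) • xs + t • x) + S (Mx ((1 - t) • xs + t • x)) := hmin
        _ ≤ ((1 - t) * f xs + t * f x) + S (N t) := add_le_add hf hSmon
    -- key inequality
    have hkey : 0 ≤ f x - f xs + (Bx - A) := by
      rcases le_or_gt M ρbar with hMle | hMgt
      · -- linear branch
        have hc1 : c = 1 := by rw [hcdef, if_pos hMle]
        have ht1 : ∀ t ∈ Ioc (0:ℝ) 1, 0 ≤ (f x - f xs) + κ * ((N t - N 0) / t) := by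
          intro t ht
          have hc2 := hchain t ht
          rw [hS_eq_lin M hMle] at hc2
          have hc3 : S (N t) ≤ κ * (N t - ρ0) := hS_le _
          have hstep : 0 ≤ t * (f x - f xs) + κ * (N t - M) := by nlinarith
          have hdiv := div_nonneg hstep ht.1.le
          rw [hN0]
          calc (0:ℝ) ≤ (t * (f x - f xs) + κ * (N t - M)) / t := hdiv
            _ = (f x - f xs) + κ * ((N t - M) / t) := by
                field_simp [ne_of_gt ht.1]
        have hslope := tendsto_slope_integral_exp Λu haam hbbm hKK habb
        rw [hexpaaM, ← hIdef] at hslope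
        have hfun_eq : (fun t : ℝ => (f x - f xs) + κ * ((N t - N 0) / t))
            = fun t : ℝ => (f x - f xs) + κ *
              (((∫ ξ, Real.exp (aa ξ + t * bb ξ) ∂Λu) - M) / t) := by
          funext t
          rw [hN0]
        have hlim : Filter.Tendsto (fun t : ℝ => (f x - f xs) + κ * ((N t - N 0) / t))
            (nhdsWithin 0 (Set.Ioi 0)) (nhds ((f x - f xs) + κ * I)) := by
          rw [hfun_eq]
          exact Filter.Tendsto.add tendsto_const_nhds (hslope.const_mul κ)
        have hfinal : 0 ≤ (f x - f xs) + κ * I := by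
          refine ge_of_tendsto hlim ?_
          filter_upwards [Ioc_mem_nhdsGT_of_mem (by simp [zero_lt_one] :
            (0:ℝ) ∈ Ico (0:ℝ) 1)] with t ht
          exact ht1 t ht
        rw [hBxA, hc1, one_mul]
        exact hfinal
      · -- log branch
        have hpos : 0 < ∫ ξ, Real.exp (aa ξ) ∂Λu := by rw [hexpaaM]; exact hM0
        have hNcont : Filter.Tendsto N (nhds 0) (nhds M) := by
          have hD := (hasDerivAt_integral_exp Λu haam hbbm hKK habb).continuousAt
          have h' : Filter.Tendsto N (nhds 0) (nhds (N 0)) := hD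
          rwa [hN0] at h'
        have hev : ∀ᶠ t in nhdsWithin 0 (Set.Ioi (0:ℝ)), ρbar < N t :=
          Filter.Eventually.filter_mono nhdsWithin_le_nhds
            (hNcont.eventually (lt_mem_nhds hMgt))
        have ht1 : ∀ᶠ t in nhdsWithin 0 (Set.Ioi (0:ℝ)),
            0 ≤ (f x - f xs) + κ * ρbar * ((Real.log (N t) - Real.log (N 0)) / t) := by
          filter_upwards [hev, Ioc_mem_nhdsGT_of_mem (by simp [zero_lt_one] :
            (0:ℝ) ∈ Ico (0:ℝ) 1)] with t htN ht
          have hc2 := hchain t ht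
          rw [hS_eq_log M hMgt.le, hS_eq_log (N t) htN.le] at hc2
          have hlog1 : Real.log (N t / ρbar) = Real.log (N t) - Real.log ρbar :=
            Real.log_div (ne_of_gt (lt_trans hρbar htN)) (ne_of_gt hρbar)
          have hlog2 : Real.log (M / ρbar) = Real.log M - Real.log ρbar :=
            Real.log_div (ne_of_gt hM0) (ne_of_gt hρbar)
          rw [hlog1, hlog2] at hc2
          have hstep : 0 ≤ t * (f x - f xs)
              + κ * ρbar * (Real.log (N t) - Real.log M) := by nlinarith
          have hdiv := div_nonneg hstep ht.1.le
          rw [hN0]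
          calc (0:ℝ) ≤ (t * (f x - f xs) + κ * ρbar * (Real.log (N t) - Real.log M)) / t :=
              hdiv
            _ = (f x - f xs) + κ * ρbar * ((Real.log (N t) - Real.log M) / t) := by
                field_simp [ne_of_gt ht.1]
        have hslope := (tendsto_slope_log_integral_exp Λu haam hbbm hKK habb hpos).const_mul
          (κ * ρbar)
        rw [hexpaaM, ← hIdef] at hslope
        have hfun_eq : (fun t : ℝ => (f x - f xs)
              + κ * ρbar * ((Real.log (N t) - Real.log (N 0)) / t))
            = fun t : ℝ => (f x - f xs) + κ * ρbar *
              ((Real.log (∫ ξ, Real.exp (aa ξ + t * bb ξ) ∂Λu) - Real.log M) / t) := by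
          funext t
          rw [hN0]
        have hlim : Filter.Tendsto (fun t : ℝ => (f x - f xs)
              + κ * ρbar * ((Real.log (N t) - Real.log (N 0)) / t))
            (nhdsWithin 0 (Set.Ioi 0)) (nhds ((f x - f xs) + κ * ρbar * (I / M))) := by
          rw [hfun_eq]
          exact Filter.Tendsto.add tendsto_const_nhds hslope
        have hfinal : 0 ≤ (f x - f xs) + κ * ρbar * (I / M) :=
          ge_of_tendsto hlim ht1
        have hcval : c = ρbar / M := by rw [hcdef, if_neg (not_le.mpr hMgt)]
        have : κ * ρbar * (I / M) = c * (κ * I) := by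
          rw [hcval]
          field_simp
        rw [hBxA, ← this]
        exact hfinal
    -- conclude in EReal
    have h2 : Lκ x Λs = ((f x + (Bx - κ * (bs - (c * M - ρ0))) : ℝ) : EReal) := by
      show ((f x + ∫ ξ in Ξ, g x ξ ∂Λs : ℝ) : EReal) - (κ : EReal) * Bprox Ξ Λs Λu = _
      rw [hBs, hBgx, ← EReal.coe_mul, ← EReal.coe_sub]
      norm_cast
      ring
    rw [hLκs_eq, h2, hAgs]
    exact EReal.coe_le_coe_iff.mpr (by linarith [hkey])
  refine ⟨xs, hxsX, Λs, hΛsmem, parta, partb, ?_, ?_⟩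
  · apply le_antisymm
    · exact le_trans (iInf₂_le xs hxsX) (iSup₂_le parta)
    · refine le_iInf₂ fun x hxX => ?_
      exact le_trans (partb x hxX) (le_iSup₂_of_le Λs hΛsmem (le_refl _))
  · apply le_antisymm
    · exact iSup₂_le fun Λ hΛ => le_trans (iInf₂_le xs hxsX) (parta Λ hΛ)
    · exact le_iSup₂_of_le Λs hΛsmem (le_iInf₂ fun x hxX => partb x hxX)
end
end

section
/- Let Ξ ⊂ ℝ^d be compact with vol(Ξ) > 0, let g : Ξ → ℝ be continuous, let γ > 0 and κ > 0, let φ_u be the uniform probability measure on Ξ, and let φ₀ be a Borel probability measure on Ξ with a continuous, everywhere positive Lebesgue density p₀. Then the functional φ ↦ D(φ, φ₀) + γκ·D(φ, φ_u) − γ·∫_Ξ g dφ over Borel probability measures φ on Ξ attains its minimum at the probability measure φ* with Lebesgue density φ*(ξ) = p₀(ξ)^{1/(1+γκ)} exp(γ g(ξ)/(1+γκ)) / ∫_Ξ p₀(ζ)^{1/(1+γκ)} exp(γ g(ζ)/(1+γκ)) dζ, and the minimum value equals −(1+γκ)·log( ∫_Ξ p₀(ξ)^{1/(1+γκ)} exp(γ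 g(ξ)/(1+γκ)) dξ ) + γκ·log(vol(Ξ)). -/
open MeasureTheory Set
open scoped Classical

noncomputable section

/-- Gibbs' inequality: the Kullback-Leibler integrand has nonnegative integral. -/
lemma gibbs_nonneg {α : Type*} [MeasurableSpace α] {μ ν : Measure α}
    [IsProbabilityMeasure μ] [IsProbabilityMeasure ν] (hμν : μ ≪ ν)
    (hint : Integrable (fun x => Real.log (μ.rnDeriv ν x).toReal) μ) :
    0 ≤ ∫ x, Real.log (μ.rnDeriv ν x).toReal ∂μ := by
  have hr_int : Integrable (fun x => (ν.rnDeriv μ x).toReal) μ :=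
    integrable_toReal_of_lintegral_ne_top (Measure.measurable_rnDeriv _ _).aemeasurable
      (lt_of_le_of_lt Measure.lintegral_rnDeriv_le (by simp)).ne
  have hle : (fun x => 1 - (ν.rnDeriv μ x).toReal) ≤ᵐ[μ]
      fun x => Real.log (μ.rnDeriv ν x).toReal := by
    filter_upwards [Measure.rnDeriv_pos hμν, hμν.ae_le (Measure.rnDeriv_lt_top μ ν),
      Measure.inv_rnDeriv hμν] with x hpos hlt hinv
    have ht : 0 < (μ.rnDeriv ν x).toReal := ENNReal.toReal_pos hpos.ne' hlt.ne
    have h1 : Real.log ((μ.rnDeriv ν x).toReal)⁻¹ ≤ ((μ.rnDeriv ν x).toReal)⁻¹ - 1 :=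
      Real.log_le_sub_one_of_pos (by positivity)
    have h2 : (ν.rnDeriv μ x).toReal = ((μ.rnDeriv ν x).toReal)⁻¹ := by
      rw [← hinv, Pi.inv_apply, ENNReal.toReal_inv]
    rw [Real.log_inv] at h1
    rw [h2]
    linarith
  have hq := integral_mono_ae ((integrable_const (1:ℝ)).sub hr_int) hint hle
  simp only [Pi.sub_apply] at hq
  rw [integral_sub (integrable_const (1:ℝ)) hr_int, integral_const] at hq
  simp only [measureReal_def, measure_univ, ENNReal.toReal_one, smul_eq_mul, one_mul, mul_one] at hq
  have hle1 : ∫ x, (ν.rnDeriv μ x).toReal ∂μ ≤ 1 := by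
    rw [Measure.integral_toReal_rnDeriv']
    simp only [measureReal_def, measure_univ, ENNReal.toReal_one]
    have : (0:ℝ) ≤ ((ν.singularPart μ) Set.univ).toReal := ENNReal.toReal_nonneg
    linarith
  linarith

/-- The dual-update objective `φ ↦ D(φ,φ₀) + γκ D(φ,φ_u) − γ ∫_Ξ g dφ` over Borel
probability measures on `Ξ` attains its minimum at the Gibbs-type measure `φ*` with
density `p₀^{1/(1+γκ)} e^{γg/(1+γκ)} / ∫_Ξ p₀^{1/(1+γκ)} e^{γg/(1+γκ)}`, and the
minimum value is `−(1+γκ) log ∫_Ξ p₀^{1/(1+γκ)} e^{γg/(1+γκ)} + γκ log(vol Ξ)`. -/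
theorem stmt_19 {d : ℕ} (Ξ : Set (EuclideanSpace ℝ (Fin d))) (hΞcomp : IsCompact Ξ)
    (hvol : 0 < volume Ξ)
    (g : EuclideanSpace ℝ (Fin d) → ℝ) (hg : ContinuousOn g Ξ)
    (γ κ : ℝ) (hγ : 0 < γ) (hκ : 0 < κ)
    (p0 : EuclideanSpace ℝ (Fin d) → ℝ) (hp0cont : ContinuousOn p0 Ξ)
    (hp0pos : ∀ ξ ∈ Ξ, 0 < p0 ξ)
    (hp0prob : IsProbabilityMeasure
      ((volume.restrict Ξ).withDensity fun ξ => ENNReal.ofReal (p0 ξ))) :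
    -- `φ₀` : the prior probability measure with density `p₀`
    let φ0 : Measure (EuclideanSpace ℝ (Fin d)) :=
      (volume.restrict Ξ).withDensity fun ξ => ENNReal.ofReal (p0 ξ)
    -- `φ_u` : the uniform probability measure on `Ξ`
    let φu : Measure (EuclideanSpace ℝ (Fin d)) := (volume Ξ)⁻¹ • volume.restrict Ξ
    -- the normalizing constant
    let Z : ℝ := ∫ ξ in Ξ, p0 ξ ^ (1 / (1 + γ * κ)) * Real.exp (γ * g ξ / (1 + γ * κ))
    -- the minimizing probability measure `φ*`
    let φs : Measure (EuclideanSpace ℝ (Fin d)) :=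
      (volume.restrict Ξ).withDensity fun ξ =>
        ENNReal.ofReal (p0 ξ ^ (1 / (1 + γ * κ)) * Real.exp (γ * g ξ / (1 + γ * κ)) / Z)
    -- the objective
    let F : Measure (EuclideanSpace ℝ (Fin d)) → EReal := fun φ =>
      KLdiv Ξ φ φ0 + ((γ * κ : ℝ) : EReal) * KLdiv Ξ φ φu
        - (γ : EReal) * ((∫ ξ in Ξ, g ξ ∂φ : ℝ) : EReal)
    IsProbabilityMeasure φs ∧
    (∀ φ : Measure (EuclideanSpace ℝ (Fin d)), IsProbabilityMeasure φ → φ Ξᶜ = 0 →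
      F φs ≤ F φ) ∧
    F φs = ((-(1 + γ * κ) * Real.log Z + γ * κ * Real.log (volume Ξ).toReal : ℝ) : EReal)
    := by
  intro φ0 φu Z φs F
  have hγκ : 0 < γ * κ := mul_pos hγ hκ
  have hcpos : (0:ℝ) < 1 + γ * κ := by linarith
  have hΞm : MeasurableSet Ξ := hΞcomp.isClosed.measurableSet
  have hvolfin : volume Ξ ≠ ⊤ := hΞcomp.measure_lt_top.ne
  have hvolne : volume Ξ ≠ 0 := hvol.ne'
  set V : ℝ := (volume Ξ).toReal with hV_def
  have hVpos : 0 < V := ENNReal.toReal_pos hvolne hvolfin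
  set q : EuclideanSpace ℝ (Fin d) → ℝ :=
    fun ξ => p0 ξ ^ (1 / (1 + γ * κ)) * Real.exp (γ * g ξ / (1 + γ * κ)) with hq_def
  have hZdef : Z = ∫ ξ in Ξ, q ξ := rfl
  have hqpos : ∀ ξ ∈ Ξ, 0 < q ξ :=
    fun ξ hξ => mul_pos (Real.rpow_pos_of_pos (hp0pos ξ hξ) _) (Real.exp_pos _)
  have hqcont : ContinuousOn q Ξ := by
    apply ContinuousOn.mul
    · exact hp0cont.rpow_const (fun ξ hξ => Or.inl (hp0pos ξ hξ).ne')
    · exact Real.continuous_exp.comp_continuousOn ((continuousOn_const.mul hg).div_const _)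
  have hqint : IntegrableOn q Ξ volume := hqcont.integrableOn_compact hΞcomp
  have hZpos : 0 < Z := by
    rw [hZdef]
    refine (setIntegral_pos_iff_support_of_nonneg_ae ?_ hqint).2 ?_
    · exact (ae_restrict_iff' hΞm).2 (ae_of_all _ fun ξ hξ => (hqpos ξ hξ).le)
    · exact lt_of_lt_of_le hvol (measure_mono fun ξ hξ => ⟨(hqpos ξ hξ).ne', hξ⟩)
  haveI hfinv : IsFiniteMeasure (volume.restrict Ξ) :=
    ⟨by rw [Measure.restrict_apply_univ]; exact hΞcomp.measure_lt_top⟩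
  have haeΞ : ∀ᵐ ξ ∂(volume.restrict Ξ), ξ ∈ Ξ := ae_restrict_mem hΞm
  have hp0aem : AEMeasurable (fun ξ => ENNReal.ofReal (p0 ξ)) (volume.restrict Ξ) :=
    ENNReal.measurable_ofReal.comp_aemeasurable (hp0cont.aemeasurable hΞm)
  have hqaem : AEMeasurable (fun ξ => ENNReal.ofReal (q ξ / Z)) (volume.restrict Ξ) :=
    ENNReal.measurable_ofReal.comp_aemeasurable ((hqcont.div_const Z).aemeasurable hΞm)
  -- absolute continuity relations
  have hφ0_ac : φ0 ≪ volume.restrict Ξ := withDensity_absolutelyContinuous _ _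
  have hac_φ0 : volume.restrict Ξ ≪ φ0 := by
    refine withDensity_absolutelyContinuous' hp0aem ?_
    filter_upwards [haeΞ] with ξ hξ
    exact (ENNReal.ofReal_pos.2 (hp0pos ξ hξ)).ne'
  have hφu_ac : φu ≪ volume.restrict Ξ := Measure.smul_absolutelyContinuous
  have hac_φu : volume.restrict Ξ ≪ φu :=
    Measure.absolutelyContinuous_smul (by simp [hvolfin])
  have hφs_ac : φs ≪ volume.restrict Ξ := withDensity_absolutelyContinuous _ _
  have hac_φs : volume.restrict Ξ ≪ φs := by
    refine withDensity_absolutelyContinuous' hqaem ?_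
    filter_upwards [haeΞ] with ξ hξ
    exact (ENNReal.ofReal_pos.2 (div_pos (hqpos ξ hξ) hZpos)).ne'
  -- φs is a probability measure
  have hφs_prob : IsProbabilityMeasure φs := by
    constructor
    have h1 : φs Set.univ = ∫⁻ ξ, ENNReal.ofReal (q ξ / Z) ∂(volume.restrict Ξ) := by
      show (volume.restrict Ξ).withDensity _ Set.univ = _
      rw [withDensity_apply _ MeasurableSet.univ, Measure.restrict_univ]
    rw [h1, ← ofReal_integral_eq_lintegral_ofReal (hqint.div_const Z)]
    · rw [integral_div, ← hZdef, div_self hZpos.ne', ENNReal.ofReal_one]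
    · filter_upwards [haeΞ] with ξ hξ
      exact (div_pos (hqpos ξ hξ) hZpos).le
  -- generic helpers
  have hmem : ∀ φ : Measure (EuclideanSpace ℝ (Fin d)), φ ≪ volume.restrict Ξ →
      ∀ᵐ ξ ∂φ, ξ ∈ Ξ := fun φ hφ => hφ.ae_le haeΞ
  have int_cont : ∀ h : EuclideanSpace ℝ (Fin d) → ℝ, ContinuousOn h Ξ →
      ∀ φ : Measure (EuclideanSpace ℝ (Fin d)), IsFiniteMeasure φ →
      φ ≪ volume.restrict Ξ → Integrable h φ := by
    intro h hcont φ hfin hac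
    haveI := hfin
    obtain ⟨C, hC⟩ := hΞcomp.exists_bound_of_continuousOn hcont
    refine ⟨(hcont.aestronglyMeasurable hΞm).mono_ac hac,
      HasFiniteIntegral.of_bounded (C := C) ?_⟩
    filter_upwards [hmem φ hac] with ξ hξ using hC ξ hξ
  have hcompl : ∀ φ : Measure (EuclideanSpace ℝ (Fin d)), φ ≪ volume.restrict Ξ →
      φ Ξᶜ = 0 := by
    intro φ hφ
    refine hφ ?_
    rw [Measure.restrict_apply hΞm.compl, compl_inter_self, measure_empty]
  have hres : ∀ φ : Measure (EuclideanSpace ℝ (Fin d)), φ Ξᶜ = 0 → φ.restrict Ξ = φ := by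
    intro φ h
    refine Measure.restrict_eq_self_of_ae_mem ?_
    rw [Filter.eventually_iff, mem_ae_iff]
    simpa using h
  -- log rnDeriv identities
  have hlog0 : ∀ φ : Measure (EuclideanSpace ℝ (Fin d)), IsProbabilityMeasure φ →
      φ ≪ volume.restrict Ξ →
      (fun ξ => Real.log (φ.rnDeriv φ0 ξ).toReal) =ᵐ[φ]
        fun ξ => Real.log (φ.rnDeriv (volume.restrict Ξ) ξ).toReal - Real.log (p0 ξ) := by
    intro φ hprob hac
    haveI := hprob
    have h1 : φ0.rnDeriv (volume.restrict Ξ) =ᵐ[volume.restrict Ξ]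
        fun ξ => ENNReal.ofReal (p0 ξ) := Measure.rnDeriv_withDensity₀ _ hp0aem
    have h2 : ((volume.restrict Ξ).rnDeriv φ0)⁻¹ =ᵐ[volume.restrict Ξ]
        φ0.rnDeriv (volume.restrict Ξ) := Measure.inv_rnDeriv hac_φ0
    have h3 : φ.rnDeriv (volume.restrict Ξ) * (volume.restrict Ξ).rnDeriv φ0
        =ᵐ[φ0] φ.rnDeriv φ0 := Measure.rnDeriv_mul_rnDeriv hac
    filter_upwards [hac.ae_le h1, hac.ae_le h2, (hac.trans hac_φ0).ae_le h3,
      hmem φ hac, Measure.rnDeriv_pos hac,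
      hac.ae_le (Measure.rnDeriv_lt_top φ (volume.restrict Ξ))]
      with ξ h1 h2 h3 hξ hpos hlt
    have hd : (volume.restrict Ξ).rnDeriv φ0 ξ = (ENNReal.ofReal (p0 ξ))⁻¹ := by
      rw [← h1, ← h2, Pi.inv_apply, inv_inv]
    have : φ.rnDeriv φ0 ξ = φ.rnDeriv (volume.restrict Ξ) ξ * (ENNReal.ofReal (p0 ξ))⁻¹ := by
      rw [← h3, Pi.mul_apply, hd]
    rw [this, ENNReal.toReal_mul, ENNReal.toReal_inv, ENNReal.toReal_ofReal (hp0pos ξ hξ).le]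
    rw [Real.log_mul (ENNReal.toReal_pos hpos.ne' hlt.ne).ne'
      (inv_ne_zero (hp0pos ξ hξ).ne'), Real.log_inv]
    ring
  have hlogu : ∀ φ : Measure (EuclideanSpace ℝ (Fin d)), IsProbabilityMeasure φ →
      φ ≪ volume.restrict Ξ →
      (fun ξ => Real.log (φ.rnDeriv φu ξ).toReal) =ᵐ[φ]
        fun ξ => Real.log (φ.rnDeriv (volume.restrict Ξ) ξ).toReal + Real.log V := by
    intro φ hprob hac
    haveI := hprob
    have h1 : φ.rnDeriv φu =ᵐ[volume.restrict Ξ]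
        ((volume Ξ)⁻¹)⁻¹ • φ.rnDeriv (volume.restrict Ξ) :=
      Measure.rnDeriv_smul_right_of_ne_top' φ (volume.restrict Ξ)
        (ENNReal.inv_ne_zero.2 hvolfin) (ENNReal.inv_ne_top.2 hvolne)
    filter_upwards [hac.ae_le h1, Measure.rnDeriv_pos hac,
      hac.ae_le (Measure.rnDeriv_lt_top φ (volume.restrict Ξ))] with ξ h1 hpos hlt
    rw [h1, Pi.smul_apply, inv_inv, smul_eq_mul, ENNReal.toReal_mul,
      Real.log_mul hVpos.ne' (ENNReal.toReal_pos hpos.ne' hlt.ne).ne']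
    ring
  have hlogs : ∀ φ : Measure (EuclideanSpace ℝ (Fin d)), IsProbabilityMeasure φ →
      φ ≪ volume.restrict Ξ →
      (fun ξ => Real.log (φ.rnDeriv φs ξ).toReal) =ᵐ[φ]
        fun ξ => Real.log (φ.rnDeriv (volume.restrict Ξ) ξ).toReal - Real.log (q ξ / Z) := by
    intro φ hprob hac
    haveI := hprob
    have h1 : φs.rnDeriv (volume.restrict Ξ) =ᵐ[volume.restrict Ξ]
        fun ξ => ENNReal.ofReal (q ξ / Z) := Measure.rnDeriv_withDensity₀ _ hqaem
    have h2 : ((volume.restrict Ξ).rnDeriv φs)⁻¹ =ᵐ[volume.restrict Ξ]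
        φs.rnDeriv (volume.restrict Ξ) := Measure.inv_rnDeriv hac_φs
    have h3 : φ.rnDeriv (volume.restrict Ξ) * (volume.restrict Ξ).rnDeriv φs
        =ᵐ[φs] φ.rnDeriv φs := Measure.rnDeriv_mul_rnDeriv hac
    filter_upwards [hac.ae_le h1, hac.ae_le h2, (hac.trans hac_φs).ae_le h3,
      hmem φ hac, Measure.rnDeriv_pos hac,
      hac.ae_le (Measure.rnDeriv_lt_top φ (volume.restrict Ξ))]
      with ξ h1 h2 h3 hξ hpos hlt
    have hqz : 0 < q ξ / Z := div_pos (hqpos ξ hξ) hZpos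
    have hd : (volume.restrict Ξ).rnDeriv φs ξ = (ENNReal.ofReal (q ξ / Z))⁻¹ := by
      rw [← h1, ← h2, Pi.inv_apply, inv_inv]
    have : φ.rnDeriv φs ξ = φ.rnDeriv (volume.restrict Ξ) ξ * (ENNReal.ofReal (q ξ / Z))⁻¹ := by
      rw [← h3, Pi.mul_apply, hd]
    rw [this, ENNReal.toReal_mul, ENNReal.toReal_inv, ENNReal.toReal_ofReal hqz.le]
    rw [Real.log_mul (ENNReal.toReal_pos hpos.ne' hlt.ne).ne' (inv_ne_zero hqz.ne'),
      Real.log_inv]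
    ring
  have hqlog : ∀ ξ ∈ Ξ, Real.log (q ξ / Z)
      = (1 / (1 + γ * κ)) * Real.log (p0 ξ) + γ * g ξ / (1 + γ * κ) - Real.log Z := by
    intro ξ hξ
    rw [Real.log_div (hqpos ξ hξ).ne' hZpos.ne']
    show Real.log (p0 ξ ^ (1 / (1 + γ * κ)) * Real.exp (γ * g ξ / (1 + γ * κ))) - _ = _
    rw [Real.log_mul (Real.rpow_pos_of_pos (hp0pos ξ hξ) _).ne' (Real.exp_pos _).ne',
      Real.log_rpow (hp0pos ξ hξ), Real.log_exp]
  -- central computation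
  have main : ∀ φ : Measure (EuclideanSpace ℝ (Fin d)), IsProbabilityMeasure φ →
      φ ≪ volume.restrict Ξ →
      φ ≪ φ0 → Integrable (fun ξ => Real.log (φ.rnDeriv φ0 ξ).toReal) φ →
      φ ≪ φu → Integrable (fun ξ => Real.log (φ.rnDeriv φu ξ).toReal) φ →
      Integrable (fun ξ => Real.log (φ.rnDeriv φs ξ).toReal) φ ∧
      F φ = (((1 + γ * κ) * ∫ ξ, Real.log (φ.rnDeriv φs ξ).toReal ∂φ
           + (-(1 + γ * κ) * Real.log Z + γ * κ * Real.log V) : ℝ) : EReal) := by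
    intro φ hprob hac h0 h0i hu hui
    haveI := hprob
    have e0 := hlog0 φ hprob hac
    have eu := hlogu φ hprob hac
    have es := hlogs φ hprob hac
    have hfi : Integrable (fun ξ => Real.log (φ.rnDeriv (volume.restrict Ξ) ξ).toReal) φ := by
      have h1 : Integrable (fun ξ => Real.log (φ.rnDeriv φu ξ).toReal - Real.log V) φ :=
        hui.sub (integrable_const (Real.log V))
      refine h1.congr ?_
      filter_upwards [eu] with ξ h
      rw [h]; ring
    have hp0i : Integrable (fun ξ => Real.log (p0 ξ)) φ := by
      have h1 : Integrable (fun ξ => Real.log (φ.rnDeriv (volume.restrict Ξ) ξ).toReal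
          - Real.log (φ.rnDeriv φ0 ξ).toReal) φ := hfi.sub h0i
      refine h1.congr ?_
      filter_upwards [e0] with ξ h
      rw [h]; ring
    have hgi : Integrable g φ := int_cont g hg φ inferInstance hac
    have I2 : Integrable (fun ξ => (1 / (1 + γ * κ)) * Real.log (p0 ξ)) φ := hp0i.const_mul _
    have I3 : Integrable (fun ξ => (γ / (1 + γ * κ)) * g ξ) φ := hgi.const_mul _
    have I4 : Integrable (fun ξ => Real.log (φ.rnDeriv (volume.restrict Ξ) ξ).toReal
        - (1 / (1 + γ * κ)) * Real.log (p0 ξ)) φ := hfi.sub I2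
    have I5 : Integrable (fun ξ => Real.log (φ.rnDeriv (volume.restrict Ξ) ξ).toReal
        - (1 / (1 + γ * κ)) * Real.log (p0 ξ) - (γ / (1 + γ * κ)) * g ξ) φ := I4.sub I3
    have es' : (fun ξ => Real.log (φ.rnDeriv φs ξ).toReal) =ᵐ[φ]
        fun ξ => Real.log (φ.rnDeriv (volume.restrict Ξ) ξ).toReal
          - (1 / (1 + γ * κ)) * Real.log (p0 ξ) - (γ / (1 + γ * κ)) * g ξ + Real.log Z := by
      filter_upwards [es, hmem φ hac] with ξ h hξ
      rw [h, hqlog ξ hξ]; ring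
    have hsi : Integrable (fun ξ => Real.log (φ.rnDeriv φs ξ).toReal) φ := by
      have h1 : Integrable (fun ξ => Real.log (φ.rnDeriv (volume.restrict Ξ) ξ).toReal
          - (1 / (1 + γ * κ)) * Real.log (p0 ξ) - (γ / (1 + γ * κ)) * g ξ + Real.log Z) φ :=
        I5.add (integrable_const (Real.log Z))
      exact h1.congr es'.symm
    refine ⟨hsi, ?_⟩
    have hresφ : φ.restrict Ξ = φ := hres φ (hcompl φ hac)
    have i0 : ∫ ξ in Ξ, Real.log (φ.rnDeriv φ0 ξ).toReal ∂φ
        = (∫ ξ, Real.log (φ.rnDeriv (volume.restrict Ξ) ξ).toReal ∂φ)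
          - ∫ ξ, Real.log (p0 ξ) ∂φ := by
      rw [hresφ, integral_congr_ae e0, integral_sub hfi hp0i]
    have iu : ∫ ξ in Ξ, Real.log (φ.rnDeriv φu ξ).toReal ∂φ
        = (∫ ξ, Real.log (φ.rnDeriv (volume.restrict Ξ) ξ).toReal ∂φ) + Real.log V := by
      rw [hresφ, integral_congr_ae eu, integral_add hfi (integrable_const _), integral_const]
      simp [measure_univ]
    have is : ∫ ξ, Real.log (φ.rnDeriv φs ξ).toReal ∂φ
        = (∫ ξ, Real.log (φ.rnDeriv (volume.restrict Ξ) ξ).toReal ∂φ)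
          - (1 / (1 + γ * κ)) * (∫ ξ, Real.log (p0 ξ) ∂φ)
          - (γ / (1 + γ * κ)) * (∫ ξ, g ξ ∂φ) + Real.log Z := by
      rw [integral_congr_ae es', integral_add I5 (integrable_const _),
        integral_sub I4 I3, integral_sub hfi I2, integral_const_mul, integral_const_mul,
        integral_const]
      simp [measure_univ]
    have ig : (∫ ξ in Ξ, g ξ ∂φ) = ∫ ξ, g ξ ∂φ := by rw [hresφ]
    have hK0 : KLdiv Ξ φ φ0
        = ((∫ ξ in Ξ, Real.log (φ.rnDeriv φ0 ξ).toReal ∂φ : ℝ) : EReal) := by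
      refine if_pos ⟨h0, ?_⟩
      show Integrable _ (φ.restrict Ξ)
      rw [hresφ]; exact h0i
    have hKu : KLdiv Ξ φ φu
        = ((∫ ξ in Ξ, Real.log (φ.rnDeriv φu ξ).toReal ∂φ : ℝ) : EReal) := by
      refine if_pos ⟨hu, ?_⟩
      show Integrable _ (φ.restrict Ξ)
      rw [hresφ]; exact hui
    show KLdiv Ξ φ φ0 + ((γ * κ : ℝ) : EReal) * KLdiv Ξ φ φu
        - (γ : EReal) * ((∫ ξ in Ξ, g ξ ∂φ : ℝ) : EReal) = _
    rw [hK0, hKu, ← EReal.coe_mul, ← EReal.coe_mul, ← EReal.coe_add, ← EReal.coe_sub,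
      EReal.coe_eq_coe_iff]
    rw [i0, iu, is, ig]
    field_simp
    ring
  -- φs satisfies the finiteness conditions
  have hφs_0 : φs ≪ φ0 := hφs_ac.trans hac_φ0
  have hφs_u : φs ≪ φu := hφs_ac.trans hac_φu
  have hfs_log : (fun ξ => Real.log (φs.rnDeriv (volume.restrict Ξ) ξ).toReal) =ᵐ[φs]
      fun ξ => Real.log (q ξ / Z) := by
    have h1 : φs.rnDeriv (volume.restrict Ξ) =ᵐ[volume.restrict Ξ]
        fun ξ => ENNReal.ofReal (q ξ / Z) := Measure.rnDeriv_withDensity₀ _ hqaem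
    filter_upwards [hφs_ac.ae_le h1, hmem φs hφs_ac] with ξ h hξ
    rw [h, ENNReal.toReal_ofReal (div_pos (hqpos ξ hξ) hZpos).le]
  have hqlogcont : ContinuousOn (fun ξ => Real.log (q ξ / Z)) Ξ :=
    (hqcont.div_const Z).log fun ξ hξ => (div_pos (hqpos ξ hξ) hZpos).ne'
  have hφs0_int : Integrable (fun ξ => Real.log (φs.rnDeriv φ0 ξ).toReal) φs := by
    have hcont : ContinuousOn (fun ξ => Real.log (q ξ / Z) - Real.log (p0 ξ)) Ξ :=
      hqlogcont.sub (hp0cont.log fun ξ hξ => (hp0pos ξ hξ).ne')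
    refine (int_cont _ hcont φs inferInstance hφs_ac).congr ?_
    filter_upwards [hlog0 φs hφs_prob hφs_ac, hfs_log] with ξ h1 h2
    rw [h1, h2]
  have hφsu_int : Integrable (fun ξ => Real.log (φs.rnDeriv φu ξ).toReal) φs := by
    have hcont : ContinuousOn (fun ξ => Real.log (q ξ / Z) + Real.log V) Ξ :=
      hqlogcont.add continuousOn_const
    refine (int_cont _ hcont φs inferInstance hφs_ac).congr ?_
    filter_upwards [hlogu φs hφs_prob hφs_ac, hfs_log] with ξ h1 h2
    rw [h1, h2]
  haveI := hφs_prob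
  obtain ⟨hsint_s, hFs⟩ := main φs hφs_prob hφs_ac hφs_0 hφs0_int hφs_u hφsu_int
  have hSs : ∫ ξ, Real.log (φs.rnDeriv φs ξ).toReal ∂φs = 0 := by
    have : (fun ξ => Real.log (φs.rnDeriv φs ξ).toReal) =ᵐ[φs] fun _ => 0 := by
      filter_upwards [Measure.rnDeriv_self φs] with ξ h
      rw [h]; simp
    rw [integral_congr_ae this, integral_zero]
  have hFs' : F φs = ((-(1 + γ * κ) * Real.log Z + γ * κ * Real.log V : ℝ) : EReal) := by
    rw [hFs, hSs]
    norm_num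
  refine ⟨hφs_prob, ?_, hFs'⟩
  intro φ hprob hφcompl
  haveI := hprob
  by_cases h0 : φ ≪ φ0 ∧ IntegrableOn (fun ξ => Real.log (φ.rnDeriv φ0 ξ).toReal) Ξ φ
  · by_cases hu : φ ≪ φu ∧ IntegrableOn (fun ξ => Real.log (φ.rnDeriv φu ξ).toReal) Ξ φ
    · have hac : φ ≪ volume.restrict Ξ := h0.1.trans hφ0_ac
      have hresφ : φ.restrict Ξ = φ := hres φ hφcompl
      have h0i : Integrable (fun ξ => Real.log (φ.rnDeriv φ0 ξ).toReal) φ := by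
        have := h0.2; rwa [IntegrableOn, hresφ] at this
      have hui : Integrable (fun ξ => Real.log (φ.rnDeriv φu ξ).toReal) φ := by
        have := hu.2; rwa [IntegrableOn, hresφ] at this
      obtain ⟨hsint, hF⟩ := main φ hprob hac h0.1 h0i hu.1 hui
      rw [hF, hFs']
      have hS : 0 ≤ ∫ ξ, Real.log (φ.rnDeriv φs ξ).toReal ∂φ :=
        gibbs_nonneg (hac.trans hac_φs) hsint
      refine EReal.coe_le_coe_iff.2 ?_
      nlinarith
    · have hKu : KLdiv Ξ φ φu = ⊤ := if_neg hu
      have hK0ne : KLdiv Ξ φ φ0 ≠ ⊥ := by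
        unfold KLdiv
        split_ifs <;> simp
      have hF : F φ = ⊤ := by
        show KLdiv Ξ φ φ0 + ((γ * κ : ℝ) : EReal) * KLdiv Ξ φ φu
          - (γ : EReal) * ((∫ ξ in Ξ, g ξ ∂φ : ℝ) : EReal) = ⊤
        rw [hKu, EReal.mul_top_of_pos (by exact_mod_cast hγκ),
          EReal.add_top_of_ne_bot hK0ne, ← EReal.coe_mul, EReal.top_sub_coe]
      rw [hF]; exact le_top
  · have hK0 : KLdiv Ξ φ φ0 = ⊤ := if_neg h0
    have hKune : ((γ * κ : ℝ) : EReal) * KLdiv Ξ φ φu ≠ ⊥ := by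
      unfold KLdiv
      split_ifs
      · rw [← EReal.coe_mul]; exact EReal.coe_ne_bot _
      · rw [EReal.mul_top_of_pos (by exact_mod_cast hγκ)]; simp
    have hF : F φ = ⊤ := by
      show KLdiv Ξ φ φ0 + ((γ * κ : ℝ) : EReal) * KLdiv Ξ φ φu
        - (γ : EReal) * ((∫ ξ in Ξ, g ξ ∂φ : ℝ) : EReal) = ⊤
      rw [hK0, EReal.top_add_of_ne_bot hKune, ← EReal.coe_mul, EReal.top_sub_coe]
    rw [hF]; exact le_top
end
end
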